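/- arXiv:1603.03191 — 2 statements merged into one kernel-verified Lean document; each statement's English description precedes it below -/
import Mathlib

section
/- Fix a prime p. For every f ∈ K(C_p) there exist finite families (h_i, μ_i) and (h'_j, μ'_j) with h_i, h'_j ∈ H_p, h_i > 0, h'_j > 0, μ_i, μ'_j ∈ ℝ satisfying h_i ≤ μ_i < p·h_i and h'_j ≤ μ'_j < p·h'_j, an element h ∈ H_p with (p−1)h = Σ_i h_i − Σ_j h'_j, and a constant c ∈ ℝ, such that f(λ) = Σ_i Θ_{h_i,μ_i}(λ) − Σ_j Θ_{h'_j,μ'_j}(λ) − hλ + c for all λ > 0. -/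
/-- The set `H_p = ℤ[1/p] = {a / p^n : a ∈ ℤ, n ∈ ℕ}` inside `ℝ`. -/
def HpSet (p : ℕ) : Set ℝ := {x : ℝ | ∃ (a : ℤ) (n : ℕ), x = (a : ℝ) / (p : ℝ) ^ n}

/-- `f` is piecewise affine on `(0,∞)` with all slopes in `S`. -/
def PiecewiseAffineWith (S : Set ℝ) (f : ℝ → ℝ) : Prop :=
  ∀ u v : ℝ, 0 < u → u < v →
    ∃ (n : ℕ) (t : ℕ → ℝ), 0 < n ∧ t 0 = u ∧ t n = v ∧ (∀ i < n, t i < t (i + 1)) ∧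
      ∀ i < n, ∃ s ∈ S, ∃ c : ℝ, ∀ x ∈ Set.Icc (t i) (t (i + 1)), f x = s * x + c

/-- `K(C_p)`: continuous piecewise affine functions on `(0,∞)` with slopes in `H_p` satisfying
`f(pλ) = f(λ)`. -/
def KCp (p : ℕ) (f : ℝ → ℝ) : Prop :=
  ContinuousOn f (Set.Ioi 0) ∧ PiecewiseAffineWith (HpSet p) f ∧
    ∀ lam : ℝ, 0 < lam → f (p * lam) = f lam

/-- `f₊(λ) = Σ_{m≥0} max(0, 1 − p^m λ)`. -/
noncomputable def fPlus (p : ℕ) (lam : ℝ) : ℝ := ∑' m : ℕ, max 0 (1 - (p : ℝ) ^ m * lam)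

/-- `f₋(λ) = Σ_{m≥1} max(0, p^{−m} λ − 1)`. -/
noncomputable def fMinus (p : ℕ) (lam : ℝ) : ℝ :=
  ∑' m : ℕ, max 0 (((p : ℝ) ^ (m + 1))⁻¹ * lam - 1)

/-- The basic theta function `θ = f₊ + f₋`. -/
noncomputable def theta (p : ℕ) (lam : ℝ) : ℝ := fPlus p lam + fMinus p lam

/-- `Θ_{h,μ}(λ) = μ θ(μ⁻¹ h λ)`. -/
noncomputable def ThetaF (p : ℕ) (h μ lam : ℝ) : ℝ := μ * theta p (μ⁻¹ * h * lam)



section Hp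

variable {p : ℕ} (hp0 : (p : ℝ) ≠ 0)

lemma Hp_int (a : ℤ) : (a : ℝ) ∈ HpSet p := ⟨a, 0, by simp⟩

include hp0

lemma Hp_sub {x y : ℝ} (hx : x ∈ HpSet p) (hy : y ∈ HpSet p) : x - y ∈ HpSet p := by
  obtain ⟨a, n, rfl⟩ := hx
  obtain ⟨b, m, rfl⟩ := hy
  refine ⟨a * (p:ℤ)^m - b * (p:ℤ)^n, n + m, ?_⟩
  push_cast
  field_simp
  ring

lemma Hp_neg {x : ℝ} (hx : x ∈ HpSet p) : -x ∈ HpSet p := by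
  have := Hp_sub hp0 (Hp_int (p := p) 0) hx
  simpa using this

lemma Hp_pmul {x : ℝ} (hx : x ∈ HpSet p) : (p:ℝ) * x ∈ HpSet p := by
  obtain ⟨a, n, rfl⟩ := hx
  refine ⟨(p:ℤ) * a, n, ?_⟩
  push_cast
  ring

end Hp

lemma Hp_decomp {p : ℕ} (hp1 : (1:ℝ) ≤ (p:ℝ)) {d : ℝ} (hd : d ∈ HpSet p) :
    ∃ u v : ℝ, u ∈ HpSet p ∧ v ∈ HpSet p ∧ 0 < u ∧ 0 < v ∧ u - v = d := by
  have hp0 : (p:ℝ) ≠ 0 := by linarith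
  obtain ⟨a, n, rfl⟩ := hd
  refine ⟨(a:ℝ) / (p:ℝ)^n + (|a| + 1 : ℤ), ((|a| + 1 : ℤ) : ℝ), ?_, Hp_int _, ?_, ?_, by ring⟩
  · have h1 : ((a:ℝ) / (p:ℝ)^n + (|a| + 1 : ℤ)) = (a:ℝ)/(p:ℝ)^n - ((-(|a|+1) : ℤ) : ℝ) := by
      push_cast; ring
    rw [h1]
    exact Hp_sub hp0 ⟨a, n, rfl⟩ (Hp_int _)
  · have hpn : (1:ℝ) ≤ (p:ℝ)^n := one_le_pow₀ hp1
    have habs : |(a:ℝ) / (p:ℝ)^n| ≤ |(a:ℝ)| := by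
      rw [abs_div, abs_of_nonneg (by positivity : (0:ℝ) ≤ (p:ℝ)^n)]
      exact div_le_self (abs_nonneg _) hpn
    have h2 : -(|(a:ℝ)|) ≤ (a:ℝ)/(p:ℝ)^n := by
      have := neg_abs_le ((a:ℝ)/(p:ℝ)^n)
      linarith [neg_le_neg habs]
    have h3 : ((|a| : ℤ) : ℝ) = |(a:ℝ)| := by push_cast; simp
    push_cast
    rw [h3] at *
    linarith
  · have : (0:ℤ) < |a| + 1 := by positivity
    exact_mod_cast this

lemma p_periodic_zero {p : ℕ} (hp1 : (1:ℝ) < (p:ℝ)) {G : ℝ → ℝ}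
    (hper : ∀ x : ℝ, 0 < x → G ((p:ℝ) * x) = G x)
    (hz : ∀ x : ℝ, 1 ≤ x → x < (p:ℝ) → G x = 0) :
    ∀ x : ℝ, 0 < x → G x = 0 := by
  have hp0 : (0:ℝ) < (p:ℝ) := by linarith
  have hpow : ∀ m : ℕ, ∀ x : ℝ, 0 < x → G ((p:ℝ)^m * x) = G x := by
    intro m
    induction m with
    | zero => intro x hx; simp
    | succ k ih =>
      intro x hx
      have e : (p:ℝ)^(k+1) * x = (p:ℝ)^k * ((p:ℝ) * x) := by ring
      rw [e, ih _ (by positivity), hper x hx]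
  intro x hx
  obtain ⟨k, hk1, hk2⟩ := exists_mem_Ico_zpow hx hp1
  have hpk : (0:ℝ) < (p:ℝ)^k := zpow_pos hp0 k
  set y := x / (p:ℝ)^k with hy
  have hy1 : 1 ≤ y := (one_le_div hpk).mpr hk1
  have hy0 : 0 < y := by linarith
  have hy2 : y < (p:ℝ) := by
    rw [hy, div_lt_iff₀ hpk]
    calc x < (p:ℝ)^(k+1) := hk2
      _ = (p:ℝ) * (p:ℝ)^k := by
          rw [zpow_add_one₀ (ne_of_gt hp0)]; ring
  have hyz : G y = 0 := hz y hy1 hy2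
  have hxy : x = (p:ℝ)^k * y := by
    rw [hy]; field_simp
  rcases le_or_gt 0 k with hk | hk
  · have e : (p:ℝ)^k = (p:ℝ)^(k.toNat) := by
      rw [← zpow_natCast]; congr 1; omega
    rw [hxy, e, hpow _ _ hy0]
    exact hyz
  · have e : ((-k).toNat : ℤ) = -k := by omega
    have hm : (p:ℝ)^(-k).toNat * x = y := by
      rw [hxy, ← mul_assoc, ← zpow_natCast (p:ℝ) (-k).toNat, e,
        ← zpow_add₀ (ne_of_gt hp0)]
      simp
    calc G x = G ((p:ℝ)^(-k).toNat * x) := (hpow _ _ hx).symm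
      _ = G y := by rw [hm]
      _ = 0 := hyz


section ThetaLemmas

variable {p : ℕ} (hp2 : (2 : ℝ) ≤ (p : ℝ))

include hp2

lemma summ_plus {x : ℝ} (hx : 0 < x) :
    Summable (fun m : ℕ => max 0 (1 - (p : ℝ) ^ m * x)) := by
  obtain ⟨N, hN⟩ := pow_unbounded_of_one_lt (x⁻¹) (by linarith : (1:ℝ) < p)
  apply summable_of_ne_finset_zero (s := Finset.range N)
  intro m hm
  simp only [Finset.mem_range, not_lt] at hm
  have hppos : (0:ℝ) < (p:ℝ)^m := by positivity
  have h1 : (1:ℝ) ≤ (p:ℝ) ^ m * x := by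
    have h : x⁻¹ < (p:ℝ) ^ m := lt_of_lt_of_le hN (pow_le_pow_right₀ (by linarith) hm)
    rw [inv_lt_comm₀ hx hppos] at h
    have h2 := mul_inv_cancel₀ (ne_of_gt hppos)
    nlinarith
  rw [max_eq_left (by linarith)]

lemma summ_minus0 {x : ℝ} (hx : 0 < x) :
    Summable (fun m : ℕ => max 0 (((p : ℝ) ^ m)⁻¹ * x - 1)) := by
  obtain ⟨N, hN⟩ := pow_unbounded_of_one_lt x (by linarith : (1:ℝ) < p)
  apply summable_of_ne_finset_zero (s := Finset.range N)
  intro m hm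
  simp only [Finset.mem_range, not_lt] at hm
  have hxp : x < (p:ℝ) ^ m :=
    lt_of_lt_of_le hN (pow_le_pow_right₀ (by linarith) hm)
  have h2 : ((p:ℝ) ^ m)⁻¹ * x ≤ 1 := by
    rw [inv_mul_le_iff₀ (by positivity)]; linarith
  rw [max_eq_left (by linarith)]

lemma summ_minus {x : ℝ} (hx : 0 < x) :
    Summable (fun m : ℕ => max 0 (((p : ℝ) ^ (m + 1))⁻¹ * x - 1)) :=
  (summable_nat_add_iff 1).mpr (summ_minus0 hp2 hx)

lemma theta_eq_max {x : ℝ} (hx1 : ((p:ℝ))⁻¹ ≤ x) (hx2 : x ≤ (p:ℝ)) :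
    theta p x = max 0 (1 - x) := by
  have hp0 : (0:ℝ) < p := by linarith
  have hplus : fPlus p x = max 0 (1 - x) := by
    rw [fPlus, tsum_eq_single 0]
    · norm_num
    · intro m hm
      have hm1 : 1 ≤ m := Nat.one_le_iff_ne_zero.mpr hm
      have h2 : (p:ℝ) ≤ (p:ℝ) ^ m := by
        calc (p:ℝ) = (p:ℝ)^1 := (pow_one _).symm
        _ ≤ (p:ℝ)^m := pow_le_pow_right₀ (by linarith) hm1
      have h1 : (1:ℝ) ≤ (p:ℝ) ^ m * x := by
        have h3 := mul_inv_cancel₀ (ne_of_gt hp0)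
        calc (1:ℝ) = (p:ℝ) * (p:ℝ)⁻¹ := h3.symm
        _ ≤ (p:ℝ)^m * x := by
            apply mul_le_mul h2 hx1 (by positivity) (by positivity)
      rw [max_eq_left (by linarith)]
  have hminus : fMinus p x = 0 := by
    rw [fMinus]
    convert tsum_zero with m
    have hxp : x ≤ (p:ℝ) ^ (m+1) := by
      calc x ≤ (p:ℝ) := hx2
      _ = (p:ℝ)^1 := (pow_one _).symm
      _ ≤ (p:ℝ)^(m+1) := pow_le_pow_right₀ (by linarith) (by omega)
    have h2 : ((p:ℝ) ^ (m+1))⁻¹ * x ≤ 1 := by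
      rw [inv_mul_le_iff₀ (by positivity)]; linarith
    rw [max_eq_left (by linarith)]
  rw [theta, hplus, hminus, add_zero]

lemma theta_p_mul {x : ℝ} (hx : 0 < x) :
    theta p ((p:ℝ) * x) = theta p x + x - 1 := by
  have hp0 : (0:ℝ) < p := by linarith
  have hplus : fPlus p ((p:ℝ) * x) = fPlus p x - max 0 (1 - x) := by
    have h1 : fPlus p x
        = max 0 (1 - (p:ℝ)^0 * x) + ∑' m : ℕ, max 0 (1 - (p:ℝ)^(m+1) * x) :=
      Summable.tsum_eq_zero_add (summ_plus hp2 hx)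
    have h2 : fPlus p ((p:ℝ) * x) = ∑' m : ℕ, max 0 (1 - (p:ℝ)^(m+1) * x) := by
      rw [fPlus]
      apply tsum_congr
      intro m
      congr 1
      rw [pow_succ]
      ring
    rw [h2]
    rw [pow_zero, one_mul] at h1
    linarith
  have hminus : fMinus p ((p:ℝ) * x) = fMinus p x + max 0 (x - 1) := by
    have h2 : fMinus p ((p:ℝ)*x) = ∑' m : ℕ, max 0 (((p:ℝ)^m)⁻¹ * x - 1) := by
      rw [fMinus]
      apply tsum_congr
      intro m
      congr 1
      rw [pow_succ]
      field_simp
    have h1 : (∑' m : ℕ, max 0 (((p:ℝ)^m)⁻¹ * x - 1))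
        = max 0 (((p:ℝ)^0)⁻¹ * x - 1)
          + ∑' m : ℕ, max 0 (((p:ℝ)^(m+1))⁻¹ * x - 1) :=
      Summable.tsum_eq_zero_add (summ_minus0 hp2 hx)
    rw [h2, h1, pow_zero, inv_one, one_mul]
    rw [fMinus]
    ring
  rw [theta, theta, hplus, hminus]
  have hmm : max 0 (x-1) - max 0 (1-x) = x - 1 := by
    rcases le_total x 1 with h | h
    · rw [max_eq_left (by linarith), max_eq_right (by linarith)]; ring
    · rw [max_eq_right (by linarith), max_eq_left (by linarith)]; ring
  linarith

lemma ThetaF_eq_max {h μ lam : ℝ} (hh : 0 < h) (h1 : h ≤ μ) (h2 : μ < (p:ℝ) * h)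
    (hl1 : 1 ≤ lam) (hl2 : lam ≤ (p:ℝ)) :
    ThetaF p h μ lam = max 0 (μ - h * lam) := by
  have hp0 : (0:ℝ) < p := by linarith
  have hμ : 0 < μ := lt_of_lt_of_le hh h1
  have hlam : 0 < lam := by linarith
  have key1 : ((p:ℝ))⁻¹ ≤ μ⁻¹ * h * lam := by
    have e1 : ((p:ℝ))⁻¹ ≤ μ⁻¹ * h := by
      rw [inv_le_iff_one_le_mul₀ hp0,
        show μ⁻¹ * h * (p:ℝ) = (h * (p:ℝ)) / μ by ring, le_div_iff₀ hμ]
      nlinarith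
    calc ((p:ℝ))⁻¹ ≤ μ⁻¹ * h := e1
      _ = μ⁻¹ * h * 1 := by ring
      _ ≤ μ⁻¹ * h * lam := by
          apply mul_le_mul_of_nonneg_left hl1 (by positivity)
  have key2 : μ⁻¹ * h * lam ≤ (p:ℝ) := by
    have e1 : μ⁻¹ * h ≤ 1 := by
      rw [← div_eq_inv_mul, div_le_one hμ]; exact h1
    calc μ⁻¹ * h * lam ≤ 1 * lam := by
          apply mul_le_mul_of_nonneg_right e1 (by positivity)
      _ = lam := one_mul lam
      _ ≤ (p:ℝ) := hl2
  rw [ThetaF, theta_eq_max hp2 key1 key2]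
  rw [mul_max_of_nonneg _ _ (le_of_lt hμ)]
  have e1 : μ * 0 = 0 := by ring
  have e2 : μ * (1 - μ⁻¹ * h * lam) = μ - h * lam := by
    field_simp
  rw [e1, e2]

lemma ThetaF_p_mul {h μ lam : ℝ} (hh : 0 < h) (hμ : 0 < μ) (hlam : 0 < lam) :
    ThetaF p h μ ((p:ℝ) * lam) = ThetaF p h μ lam + h * lam - μ := by
  have hx : 0 < μ⁻¹ * h * lam := by positivity
  have e : μ⁻¹ * h * ((p:ℝ) * lam) = (p:ℝ) * (μ⁻¹ * h * lam) := by ring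
  rw [ThetaF, e, theta_p_mul hp2 hx, ThetaF]
  field_simp

end ThetaLemmas

/-- canonical decomposition in theta functions. Every `f ∈ K(C_p)` can be
written as `f(λ) = Σ_i Θ_{h_i,μ_i}(λ) − Σ_j Θ_{h'_j,μ'_j}(λ) − hλ + c` with
`h_i ≤ μ_i < p h_i`, `h'_j ≤ μ'_j < p h'_j`, `(p−1)h = Σ h_i − Σ h'_j` and `c ∈ ℝ`. -/
theorem statement10 (p : ℕ) (hp : p.Prime) (f : ℝ → ℝ) (hf : KCp p f) :
    ∃ (k l : ℕ) (hs μs : Fin k → ℝ) (hs' μs' : Fin l → ℝ) (h c : ℝ),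
      (∀ i, hs i ∈ HpSet p ∧ 0 < hs i ∧ hs i ≤ μs i ∧ μs i < p * hs i) ∧
      (∀ j, hs' j ∈ HpSet p ∧ 0 < hs' j ∧ hs' j ≤ μs' j ∧ μs' j < p * hs' j) ∧
      h ∈ HpSet p ∧ ((p : ℝ) - 1) * h = (∑ i, hs i) - (∑ j, hs' j) ∧
      ∀ lam : ℝ, 0 < lam →
        f lam = (∑ i, ThetaF p (hs i) (μs i) lam)
          - (∑ j, ThetaF p (hs' j) (μs' j) lam) - h * lam + c := by
  classical
  obtain ⟨hcont, hpa, hperiod⟩ := hf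
  have hp2 : (2:ℝ) ≤ (p:ℝ) := by exact_mod_cast hp.two_le
  have hp1 : (1:ℝ) < (p:ℝ) := by linarith
  have hp0 : (p:ℝ) ≠ 0 := by linarith
  obtain ⟨n, t, hn, ht0, htn, htlt, hpieces⟩ := hpa 1 (p:ℝ) one_pos hp1
  -- choose slopes and intercepts
  have hchoice : ∀ i : ℕ, ∃ si ci : ℝ, i < n →
      si ∈ HpSet p ∧ ∀ x ∈ Set.Icc (t i) (t (i+1)), f x = si * x + ci := by
    intro i
    by_cases h : i < n
    · obtain ⟨si, hsi, ci, hci⟩ := hpieces i h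
      exact ⟨si, ci, fun _ => ⟨hsi, hci⟩⟩
    · exact ⟨0, 0, fun hh => absurd hh h⟩
  choose s cc hscc using hchoice
  have hsH : ∀ i, i < n → s i ∈ HpSet p := fun i hi => (hscc i hi).1
  have haff : ∀ i, i < n → ∀ x ∈ Set.Icc (t i) (t (i+1)), f x = s i * x + cc i :=
    fun i hi => (hscc i hi).2
  have hn1 : n - 1 < n := by omega
  have hn1' : n - 1 + 1 = n := by omega
  -- monotonicity of t
  have htmono : ∀ j, j ≤ n → ∀ i, i ≤ j → t i ≤ t j := by
    intro j
    induction j with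
    | zero => intro _ i hi; simp [Nat.le_zero.mp hi]
    | succ k ih =>
      intro hk i hi
      rcases eq_or_lt_of_le hi with h | h
      · rw [h]
      · have h2 : t i ≤ t k := ih (by omega) i (by omega)
        have h3 : t k < t (k+1) := htlt k (by omega)
        linarith
  have ht1 : ∀ i, i ≤ n → 1 ≤ t i := by
    intro i hi
    have h := htmono i hi 0 (Nat.zero_le i)
    rw [ht0] at h; exact h
  have htp : ∀ i, i < n → t i < (p:ℝ) := by
    intro i hi
    have h1 : t (i+1) ≤ t n := htmono n le_rfl (i+1) hi
    rw [htn] at h1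
    linarith [htlt i hi]
  -- slope jumps
  set d : ℕ → ℝ := fun j => if j = 0 then s 0 - (p:ℝ) * s (n-1) else s j - s (j-1) with hd
  have hd0 : d 0 = s 0 - (p:ℝ) * s (n-1) := by simp [hd]
  have hdsucc : ∀ j : ℕ, d (j+1) = s (j+1) - s j := by
    intro j; simp [hd]
  have hdH : ∀ j, j < n → d j ∈ HpSet p := by
    intro j hj
    rcases Nat.eq_zero_or_pos j with h0 | h0
    · rw [h0, hd0]
      exact Hp_sub hp0 (hsH 0 hn) (Hp_pmul hp0 (hsH (n-1) hn1))
    · have hj0 : j ≠ 0 := by omega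
      have : d j = s j - s (j-1) := by simp [hd, hj0]
      rw [this]
      exact Hp_sub hp0 (hsH j hj) (hsH (j-1) (by omega))
  have hdec : ∀ j : ℕ, ∃ u v : ℝ, j < n →
      u ∈ HpSet p ∧ v ∈ HpSet p ∧ 0 < u ∧ 0 < v ∧ u - v = d j := by
    intro j
    by_cases hj : j < n
    · obtain ⟨u, v, h⟩ := Hp_decomp (le_of_lt hp1) (hdH j hj)
      exact ⟨u, v, fun _ => h⟩
    · exact ⟨0, 0, fun hh => absurd hh hj⟩
  choose e e' hee using hdec
  -- telescoping sums
  have tel1 : ∀ J, J < n → ∑ j ∈ Finset.range (J+1), d j = s J - (p:ℝ) * s (n-1) := by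
    intro J
    induction J with
    | zero => intro _; rw [Finset.sum_range_one, hd0]
    | succ K ih =>
      intro hK
      rw [Finset.sum_range_succ, ih (by omega), hdsucc]
      ring
  have tel : ∑ j ∈ Finset.range n, d j = (1 - (p:ℝ)) * s (n-1) := by
    have h := tel1 (n-1) hn1
    rw [hn1'] at h
    rw [h]; ring
  -- intercept recursion
  have hcc : ∀ J, J < n →
      cc J = (f 1 - (p:ℝ) * s (n-1)) - ∑ j ∈ Finset.range (J+1), d j * t j := by
    intro J
    induction J with
    | zero =>
      intro _
      have h1 : f 1 = s 0 * 1 + cc 0 := by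
        apply haff 0 hn
        constructor
        · rw [ht0]
        · rw [← ht0]; exact le_of_lt (htlt 0 hn)
      rw [Finset.sum_range_one, hd0, ht0]
      linarith
    | succ K ih =>
      intro hK
      have hKn : K < n := by omega
      have hx1 : f (t (K+1)) = s K * t (K+1) + cc K :=
        haff K hKn _ ⟨le_of_lt (htlt K hKn), le_refl _⟩
      have hx2 : f (t (K+1)) = s (K+1) * t (K+1) + cc (K+1) :=
        haff (K+1) hK _ ⟨le_refl _, le_of_lt (htlt (K+1) hK)⟩
      rw [Finset.sum_range_succ, hdsucc]
      linear_combination ih hKn + hx1 - hx2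
  -- sum of d j * t j vanishes
  have sumdt : ∑ j ∈ Finset.range n, d j * t j = 0 := by
    have hfp : f (p:ℝ) = f 1 := by
      have h := hperiod 1 one_pos
      simpa using h
    have hm : (p:ℝ) ∈ Set.Icc (t (n-1)) (t (n-1+1)) := by
      rw [hn1', htn]
      exact ⟨le_of_lt (htp (n-1) hn1), le_refl _⟩
    have hfp2 : f (p:ℝ) = s (n-1) * (p:ℝ) + cc (n-1) := haff (n-1) hn1 _ hm
    have hccn := hcc (n-1) hn1
    rw [hn1'] at hccn
    rw [hccn, hfp] at hfp2
    linear_combination hfp2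
  have hpos_e : ∀ j, j < n → 0 < e j := fun j hj => (hee j hj).2.2.1
  have hpos_e' : ∀ j, j < n → 0 < e' j := fun j hj => (hee j hj).2.2.2.1
  refine ⟨n, n, fun i => e i, fun i => e i * t i, fun i => e' i, fun i => e' i * t i,
    -(s (n-1)), f 1 - (p:ℝ) * s (n-1), ?_, ?_, ?_, ?_, ?_⟩
  · intro i
    have hu := (hee i i.isLt).1
    have hupos := hpos_e i i.isLt
    have h1i : 1 ≤ t i.val := ht1 i (le_of_lt i.isLt)
    have hpi : t i.val < (p:ℝ) := htp i i.isLt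
    refine ⟨hu, hupos, ?_, ?_⟩ <;> dsimp only <;> nlinarith
  · intro i
    have hu := (hee i i.isLt).2.1
    have hupos := hpos_e' i i.isLt
    have h1i : 1 ≤ t i.val := ht1 i (le_of_lt i.isLt)
    have hpi : t i.val < (p:ℝ) := htp i i.isLt
    refine ⟨hu, hupos, ?_, ?_⟩ <;> dsimp only <;> nlinarith
  · exact Hp_neg hp0 (hsH (n-1) hn1)
  · dsimp only
    have hsplit : (∑ i : Fin n, e i.val) - (∑ j : Fin n, e' j.val)
        = ∑ j ∈ Finset.range n, d j := by
      rw [Fin.sum_univ_eq_sum_range e n, Fin.sum_univ_eq_sum_range e' n,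
        ← Finset.sum_sub_distrib]
      exact Finset.sum_congr rfl (fun j hj => (hee j (Finset.mem_range.mp hj)).2.2.2.2)
    rw [hsplit, tel]
    ring
  · -- pointwise identity on [1, p)
    dsimp only
    have key : ∀ lam : ℝ, 1 ≤ lam → lam < (p:ℝ) →
        f lam = (∑ i : Fin n, ThetaF p (e i.val) (e i.val * t i.val) lam)
          - (∑ j : Fin n, ThetaF p (e' j.val) (e' j.val * t j.val) lam)
          - (-(s (n-1))) * lam + (f 1 - (p:ℝ) * s (n-1)) := by
      intro lam hl1 hl2
      set J := Nat.findGreatest (fun j => t j ≤ lam) n with hJ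
      have hPJ : t J ≤ lam := Nat.findGreatest_spec (P := fun j => t j ≤ lam) (Nat.zero_le n) (show t 0 ≤ lam by rw [ht0]; exact hl1)
      have hJle : J ≤ n := Nat.findGreatest_le n
      have hJn : J < n := by
        rcases eq_or_lt_of_le hJle with h | h
        · exfalso; rw [h, htn] at hPJ; linarith
        · exact h
      have hlt : lam < t (J+1) := by
        by_contra hcon
        push_neg at hcon
        exact Nat.findGreatest_is_greatest (k := J+1) (P := fun j => t j ≤ lam) (n := n) (by omega) (by omega) hcon
      have hflam : f lam = s J * lam + cc J := haff J hJn lam ⟨hPJ, le_of_lt hlt⟩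
      have m1 : ∀ a b : ℝ, 0 ≤ a → max 0 (a * b) = a * max 0 b := by
        intro a b ha
        rw [mul_max_of_nonneg _ _ ha, mul_zero]
      have hth : ∀ j, j < n →
          ThetaF p (e j) (e j * t j) lam - ThetaF p (e' j) (e' j * t j) lam
            = d j * max 0 (t j - lam) := by
        intro j hj
        obtain ⟨_, _, hu, hv, huv⟩ := hee j hj
        have h1j : 1 ≤ t j := ht1 j (le_of_lt hj)
        have hpj : t j < (p:ℝ) := htp j hj
        rw [ThetaF_eq_max hp2 hu (by nlinarith) (by nlinarith) hl1 (le_of_lt hl2),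
          ThetaF_eq_max hp2 hv (by nlinarith) (by nlinarith) hl1 (le_of_lt hl2)]
        have e1 : e j * t j - e j * lam = e j * (t j - lam) := by ring
        have e2 : e' j * t j - e' j * lam = e' j * (t j - lam) := by ring
        rw [e1, e2, m1 _ _ (le_of_lt hu), m1 _ _ (le_of_lt hv), ← sub_mul, huv]
      have hsum1 : (∑ i : Fin n, ThetaF p (e i.val) (e i.val * t i.val) lam)
            - (∑ j : Fin n, ThetaF p (e' j.val) (e' j.val * t j.val) lam)
          = ∑ j ∈ Finset.range n, d j * max 0 (t j - lam) := by
        rw [Fin.sum_univ_eq_sum_range (fun j => ThetaF p (e j) (e j * t j) lam) n,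
          Fin.sum_univ_eq_sum_range (fun j => ThetaF p (e' j) (e' j * t j) lam) n,
          ← Finset.sum_sub_distrib]
        exact Finset.sum_congr rfl (fun j hj => hth j (Finset.mem_range.mp hj))
      have hsum2 : ∑ j ∈ Finset.range n, d j * max 0 (t j - lam)
          = (∑ j ∈ Finset.range n, d j * (t j - lam))
            - ∑ j ∈ Finset.range (J+1), d j * (t j - lam) := by
        rw [← Finset.sum_Ico_eq_sub _ (by omega : J+1 ≤ n)]
        have hs1 : ∑ j ∈ Finset.range n, d j * max 0 (t j - lam)
            = ∑ j ∈ Finset.Ico (J+1) n, d j * max 0 (t j - lam) := by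
          rw [Finset.range_eq_Ico,
            ← Finset.sum_Ico_consecutive _ (Nat.zero_le (J+1)) (by omega : J+1 ≤ n)]
          have hz0 : ∑ j ∈ Finset.Ico 0 (J+1), d j * max 0 (t j - lam) = 0 := by
            apply Finset.sum_eq_zero
            intro j hj
            obtain ⟨_, hj2⟩ := Finset.mem_Ico.mp hj
            have htj : t j ≤ t J := htmono J (le_of_lt hJn) j (by omega)
            rw [max_eq_left (by linarith), mul_zero]
          rw [hz0, zero_add]
        rw [hs1]
        apply Finset.sum_congr rfl
        intro j hj
        obtain ⟨hj1, hj2⟩ := Finset.mem_Ico.mp hj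
        have htj : t (J+1) ≤ t j := htmono j (le_of_lt hj2) (J+1) (by omega)
        rw [max_eq_right (by linarith)]
      have hsum3 : ∑ j ∈ Finset.range n, d j * (t j - lam)
          = - ((1 - (p:ℝ)) * s (n-1) * lam) := by
        have hc : ∀ j ∈ Finset.range n, d j * (t j - lam) = d j * t j - d j * lam :=
          fun j _ => by ring
        rw [Finset.sum_congr rfl hc, Finset.sum_sub_distrib, sumdt, ← Finset.sum_mul, tel]
        ring
      have hsum4 : ∑ j ∈ Finset.range (J+1), d j * (t j - lam)
          = (∑ j ∈ Finset.range (J+1), d j * t j) - (s J - (p:ℝ) * s (n-1)) * lam := by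
        have hc : ∀ j ∈ Finset.range (J+1), d j * (t j - lam) = d j * t j - d j * lam :=
          fun j _ => by ring
        rw [Finset.sum_congr rfl hc, Finset.sum_sub_distrib, ← Finset.sum_mul, tel1 J hJn]
      rw [hsum1, hsum2, hsum3, hsum4, hflam, hcc J hJn]
      ring
    -- extend by periodicity
    set G : ℝ → ℝ := fun x => f x - ((∑ i : Fin n, ThetaF p (e i.val) (e i.val * t i.val) x)
      - (∑ j : Fin n, ThetaF p (e' j.val) (e' j.val * t j.val) x)
      - (-(s (n-1))) * x + (f 1 - (p:ℝ) * s (n-1))) with hG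
    have hz : ∀ x : ℝ, 1 ≤ x → x < (p:ℝ) → G x = 0 := by
      intro x h1 h2
      have hk := key x h1 h2
      rw [hG]
      dsimp only
      linarith
    have hGper : ∀ x : ℝ, 0 < x → G ((p:ℝ)*x) = G x := by
      intro x hx
      have hA : ∑ i : Fin n, ThetaF p (e i.val) (e i.val * t i.val) ((p:ℝ)*x)
          = (∑ i : Fin n, ThetaF p (e i.val) (e i.val * t i.val) x)
            + (∑ j ∈ Finset.range n, e j) * x - ∑ j ∈ Finset.range n, e j * t j := by
        rw [Fin.sum_univ_eq_sum_range (fun j => ThetaF p (e j) (e j * t j) ((p:ℝ)*x)) n,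
            Fin.sum_univ_eq_sum_range (fun j => ThetaF p (e j) (e j * t j) x) n]
        have hc : ∀ j ∈ Finset.range n, ThetaF p (e j) (e j * t j) ((p:ℝ)*x)
            = ThetaF p (e j) (e j * t j) x + e j * x - e j * t j := by
          intro j hj
          have hj' := Finset.mem_range.mp hj
          have htj : 0 < t j := lt_of_lt_of_le one_pos (ht1 j (le_of_lt hj'))
          exact ThetaF_p_mul hp2 (hpos_e j hj') (mul_pos (hpos_e j hj') htj) hx
        rw [Finset.sum_congr rfl hc, Finset.sum_sub_distrib, Finset.sum_add_distrib,
          ← Finset.sum_mul]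
      have hB : ∑ i : Fin n, ThetaF p (e' i.val) (e' i.val * t i.val) ((p:ℝ)*x)
          = (∑ i : Fin n, ThetaF p (e' i.val) (e' i.val * t i.val) x)
            + (∑ j ∈ Finset.range n, e' j) * x - ∑ j ∈ Finset.range n, e' j * t j := by
        rw [Fin.sum_univ_eq_sum_range (fun j => ThetaF p (e' j) (e' j * t j) ((p:ℝ)*x)) n,
            Fin.sum_univ_eq_sum_range (fun j => ThetaF p (e' j) (e' j * t j) x) n]
        have hc : ∀ j ∈ Finset.range n, ThetaF p (e' j) (e' j * t j) ((p:ℝ)*x)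
            = ThetaF p (e' j) (e' j * t j) x + e' j * x - e' j * t j := by
          intro j hj
          have hj' := Finset.mem_range.mp hj
          have htj : 0 < t j := lt_of_lt_of_le one_pos (ht1 j (le_of_lt hj'))
          exact ThetaF_p_mul hp2 (hpos_e' j hj') (mul_pos (hpos_e' j hj') htj) hx
        rw [Finset.sum_congr rfl hc, Finset.sum_sub_distrib, Finset.sum_add_distrib,
          ← Finset.sum_mul]
      have hdt : (∑ j ∈ Finset.range n, e j * t j) - ∑ j ∈ Finset.range n, e' j * t j
          = 0 := by
        rw [← Finset.sum_sub_distrib, ← sumdt]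
        apply Finset.sum_congr rfl
        intro j hj
        have huv := (hee j (Finset.mem_range.mp hj)).2.2.2.2
        rw [← huv]; ring
      have hde : (∑ j ∈ Finset.range n, e j) - ∑ j ∈ Finset.range n, e' j
          = (1 - (p:ℝ)) * s (n-1) := by
        rw [← Finset.sum_sub_distrib, ← tel]
        exact Finset.sum_congr rfl (fun j hj => (hee j (Finset.mem_range.mp hj)).2.2.2.2)
      rw [hG]
      dsimp only
      rw [hperiod x hx, hA, hB]
      ring_nf
      linear_combination (-x) * hde + hdt
    intro lam hlam
    have hGz := p_periodic_zero hp1 hGper hz lam hlam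
    rw [hG] at hGz
    dsimp only at hGz
    linarith
end

section
/- Fix a prime p and a divisor D given by points 0 < λ_0 < … < λ_{n−1} < pλ_0 and elements a_0, …, a_{n−1} ∈ H_p; write D(λ) := a_j·λ_j if λ = λ_j and D(λ) := 0 for all other λ ∈ [λ_0, pλ_0). Say f ∈ K(C_p) solves the Riemann–Roch problem for D if D(λ) + Ord_λ(f) ≥ 0 for every λ ∈ [λ_0, pλ_0). Then: (i) if Σ_j a_j·λ_j < 0, no f ∈ K(C_p) solves the problem; (ii) if Σ_j a_j·λ_j > 0, some f ∈ K(C_p) solves the problem. -/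
/-- `f` has right-hand slope `s` at `x`. -/
def HasRightSlope (f : ℝ → ℝ) (x s : ℝ) : Prop :=
  ∃ δ : ℝ, 0 < δ ∧ ∀ y ∈ Set.Ico x (x + δ), f y = f x + s * (y - x)

/-- `f` has left-hand slope `s` at `x`. -/
def HasLeftSlope (f : ℝ → ℝ) (x s : ℝ) : Prop :=
  ∃ δ : ℝ, 0 < δ ∧ ∀ y ∈ Set.Ioc (x - δ) x, f y = f x + s * (y - x)

/-- The order of `f` at `λ` is `d = λ (f'₊(λ) − f'₋(λ))`. -/
def HasOrdAt (f : ℝ → ℝ) (lam d : ℝ) : Prop :=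
  ∃ sp sm : ℝ, HasRightSlope f lam sp ∧ HasLeftSlope f lam sm ∧ d = lam * (sp - sm)

/-- `f` solves the Riemann–Roch problem for the divisor `D` with support
`{λ_0, …, λ_{n−1}} ⊆ [λ_0, pλ_0)` and values `D(λ_j) = a_j λ_j`:
`D(λ) + Ord_λ(f) ≥ 0` for every `λ` in the fundamental domain `[λ_0, pλ_0)`. -/
def SolvesRR (p : ℕ) (n : ℕ) (lam a : ℕ → ℝ) (f : ℝ → ℝ) : Prop :=
  (∀ j, j < n → ∀ d : ℝ, HasOrdAt f (lam j) d → 0 ≤ a j * lam j + d) ∧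
  (∀ x ∈ Set.Ico (lam 0) ((p : ℝ) * lam 0),
    (∀ j, j < n → x ≠ lam j) → ∀ d : ℝ, HasOrdAt f x d → 0 ≤ d)

set_option linter.unusedSectionVars false

section hp
variable {p : ℕ} (hp : p.Prime)
include hp

lemma hp_pos : (0:ℝ) < (p:ℝ) := by exact_mod_cast hp.pos
lemma hp_ne : (p:ℝ) ≠ 0 := (hp_pos hp).ne'
lemma hp_one_lt : (1:ℝ) < (p:ℝ) := by exact_mod_cast hp.one_lt

lemma hp_zero : (0:ℝ) ∈ HpSet p := ⟨0, 0, by simp⟩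

lemma hp_neg {x : ℝ} (h : x ∈ HpSet p) : -x ∈ HpSet p := by
  obtain ⟨a, m, rfl⟩ := h; exact ⟨-a, m, by push_cast; ring⟩

lemma hp_add {x y : ℝ} (hx : x ∈ HpSet p) (hy : y ∈ HpSet p) : x + y ∈ HpSet p := by
  obtain ⟨a, m, rfl⟩ := hx; obtain ⟨b, k, rfl⟩ := hy
  refine ⟨a * (p:ℤ)^k + b * (p:ℤ)^m, m + k, ?_⟩
  have h0 : (p:ℝ) ≠ 0 := hp_ne hp
  push_cast
  rw [div_add_div _ _ (pow_ne_zero m h0) (pow_ne_zero k h0), pow_add]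
  ring_nf

lemma hp_sum {ι : Type*} (s : Finset ι) (F : ι → ℝ) (h : ∀ i ∈ s, F i ∈ HpSet p) :
    (∑ i ∈ s, F i) ∈ HpSet p :=
  Finset.sum_induction F (· ∈ HpSet p) (fun _ _ => hp_add hp) (hp_zero hp) h

lemma hp_mul_p {x : ℝ} (hx : x ∈ HpSet p) : x * (p:ℝ) ∈ HpSet p := by
  obtain ⟨a, m, rfl⟩ := hx
  have h0 : (p:ℝ) ≠ 0 := hp_ne hp
  match m with
  | 0 => exact ⟨a * p, 0, by push_cast; simp⟩
  | m + 1 => exact ⟨a, m, by push_cast; rw [pow_succ]; field_simp⟩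

lemma hp_div_p {x : ℝ} (hx : x ∈ HpSet p) : x / (p:ℝ) ∈ HpSet p := by
  obtain ⟨a, m, rfl⟩ := hx
  exact ⟨a, m + 1, by rw [pow_succ]; field_simp⟩

lemma hp_mul_zpow {x : ℝ} (hx : x ∈ HpSet p) (k : ℤ) : x * (p:ℝ) ^ k ∈ HpSet p := by
  have h0 : (p:ℝ) ≠ 0 := hp_ne hp
  induction k using Int.induction_on with
  | zero => simpa using hx
  | succ k ih => rw [zpow_add_one₀ h0, ← mul_assoc]; exact hp_mul_p hp ih
  | pred k ih => rw [zpow_sub_one₀ h0, ← mul_assoc, ← div_eq_mul_inv]; exact hp_div_p hp ih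

lemma hp_dense (u v : ℝ) (huv : u < v) : ∃ w ∈ HpSet p, u < w ∧ w < v := by
  obtain ⟨m, hm⟩ := pow_unbounded_of_one_lt (1 / (v - u)) (hp_one_lt hp)
  have hp0 := hp_pos hp
  have hpm : (0:ℝ) < (p:ℝ)^m := by positivity
  refine ⟨((⌊(p:ℝ)^m * u⌋ + 1 : ℤ) : ℝ) / (p:ℝ)^m, ⟨⌊(p:ℝ)^m * u⌋ + 1, m, by push_cast; ring⟩, ?_, ?_⟩
  · rw [lt_div_iff₀ hpm]
    have := Int.lt_floor_add_one ((p:ℝ)^m * u)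
    push_cast
    nlinarith
  · rw [div_lt_iff₀ hpm]
    have h1 : ((⌊(p:ℝ)^m * u⌋ : ℝ) + 1) ≤ (p:ℝ)^m * u + 1 := by
      have := Int.floor_le ((p:ℝ)^m * u); linarith
    have h2 : 1 < (p:ℝ)^m * (v - u) := by
      rw [div_lt_iff₀ (by linarith)] at hm; nlinarith
    push_cast
    nlinarith
end hp


lemma HasRightSlope.add {f g : ℝ → ℝ} {z s r : ℝ} (hf : HasRightSlope f z s)
    (hg : HasRightSlope g z r) : HasRightSlope (fun y => f y + g y) z (s + r) := by
  obtain ⟨δ1, h1, H1⟩ := hf; obtain ⟨δ2, h2, H2⟩ := hg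
  refine ⟨min δ1 δ2, lt_min h1 h2, fun y hy => ?_⟩
  obtain ⟨hy1, hy2⟩ := hy
  show f y + g y = (f z + g z) + (s + r) * (y - z)
  rw [H1 y ⟨hy1, lt_of_lt_of_le hy2 (by linarith [min_le_left δ1 δ2])⟩,
      H2 y ⟨hy1, lt_of_lt_of_le hy2 (by linarith [min_le_right δ1 δ2])⟩]
  ring

lemma HasLeftSlope.add {f g : ℝ → ℝ} {z s r : ℝ} (hf : HasLeftSlope f z s)
    (hg : HasLeftSlope g z r) : HasLeftSlope (fun y => f y + g y) z (s + r) := by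
  obtain ⟨δ1, h1, H1⟩ := hf; obtain ⟨δ2, h2, H2⟩ := hg
  refine ⟨min δ1 δ2, lt_min h1 h2, fun y hy => ?_⟩
  obtain ⟨hy1, hy2⟩ := hy
  have l1 : z - δ1 ≤ z - min δ1 δ2 := by linarith [min_le_left δ1 δ2]
  have l2 : z - δ2 ≤ z - min δ1 δ2 := by linarith [min_le_right δ1 δ2]
  show f y + g y = (f z + g z) + (s + r) * (y - z)
  rw [H1 y ⟨lt_of_le_of_lt l1 hy1, hy2⟩, H2 y ⟨lt_of_le_of_lt l2 hy1, hy2⟩]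
  ring

lemma hasRightSlope_sum {ι : Type*} (s : Finset ι) (F : ι → ℝ → ℝ) (σ : ι → ℝ) {z : ℝ}
    (h : ∀ i ∈ s, HasRightSlope (F i) z (σ i)) :
    HasRightSlope (fun y => ∑ i ∈ s, F i y) z (∑ i ∈ s, σ i) := by
  classical
  induction s using Finset.induction_on with
  | empty => exact ⟨1, one_pos, by simp⟩
  | insert _ _ hni ih =>
    rename_i i s'
    simp only [Finset.sum_insert hni]
    exact (h i (Finset.mem_insert_self i s')).add
      (ih fun j hj => h j (Finset.mem_insert_of_mem hj))

lemma hasLeftSlope_sum {ι : Type*} (s : Finset ι) (F : ι → ℝ → ℝ) (σ : ι → ℝ) {z : ℝ}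
    (h : ∀ i ∈ s, HasLeftSlope (F i) z (σ i)) :
    HasLeftSlope (fun y => ∑ i ∈ s, F i y) z (∑ i ∈ s, σ i) := by
  classical
  induction s using Finset.induction_on with
  | empty => exact ⟨1, one_pos, by simp⟩
  | insert _ _ hni ih =>
    rename_i i s'
    simp only [Finset.sum_insert hni]
    exact (h i (Finset.mem_insert_self i s')).add
      (ih fun j hj => h j (Finset.mem_insert_of_mem hj))

lemma hasRightSlope_linear (c w z : ℝ) : HasRightSlope (fun y => c * (y - w)) z c :=
  ⟨1, one_pos, fun y _ => by ring⟩

lemma hasLeftSlope_linear (c w z : ℝ) : HasLeftSlope (fun y => c * (y - w)) z c :=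
  ⟨1, one_pos, fun y _ => by ring⟩

lemma hasRightSlope_hinge (c w z : ℝ) :
    HasRightSlope (fun y => c * max 0 (y - w)) z (if w ≤ z then c else 0) := by
  split_ifs with h
  · refine ⟨1, one_pos, fun y hy => ?_⟩
    show c * max 0 (y - w) = c * max 0 (z - w) + c * (y - z)
    rw [max_eq_right (by linarith [hy.1] : (0:ℝ) ≤ y - w), max_eq_right (by linarith : (0:ℝ) ≤ z - w)]
    ring
  · push_neg at h
    refine ⟨w - z, by linarith, fun y hy => ?_⟩
    show c * max 0 (y - w) = c * max 0 (z - w) + 0 * (y - z)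
    rw [max_eq_left (by linarith [hy.2] : y - w ≤ 0), max_eq_left (by linarith : z - w ≤ 0)]
    ring

lemma hasLeftSlope_hinge (c w z : ℝ) :
    HasLeftSlope (fun y => c * max 0 (y - w)) z (if w < z then c else 0) := by
  split_ifs with h
  · refine ⟨z - w, by linarith, fun y hy => ?_⟩
    have hwy : w < y := by have := hy.1; linarith
    show c * max 0 (y - w) = c * max 0 (z - w) + c * (y - z)
    rw [max_eq_right (by linarith : (0:ℝ) ≤ y - w), max_eq_right (by linarith : (0:ℝ) ≤ z - w)]
    ring
  · push_neg at h
    refine ⟨1, one_pos, fun y hy => ?_⟩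
    show c * max 0 (y - w) = c * max 0 (z - w) + 0 * (y - z)
    rw [max_eq_left (by linarith [hy.2] : y - w ≤ 0), max_eq_left (by linarith : z - w ≤ 0)]
    ring

lemma HasRightSlope.congr {f f' : ℝ → ℝ} {z s : ℝ} (h : HasRightSlope f z s) (δ' : ℝ)
    (hδ' : 0 < δ') (he : ∀ y ∈ Set.Ico z (z + δ'), f y = f' y) : HasRightSlope f' z s := by
  obtain ⟨δ, hδ, H⟩ := h
  have hz : f z = f' z := he z ⟨le_refl z, by linarith⟩
  refine ⟨min δ δ', lt_min hδ hδ', fun y hy => ?_⟩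
  obtain ⟨hy1, hy2⟩ := hy
  rw [← he y ⟨hy1, lt_of_lt_of_le hy2 (by linarith [min_le_right δ δ'])⟩, ← hz,
    H y ⟨hy1, lt_of_lt_of_le hy2 (by linarith [min_le_left δ δ'])⟩]

lemma HasLeftSlope.congr {f f' : ℝ → ℝ} {z s : ℝ} (h : HasLeftSlope f z s) (δ' : ℝ)
    (hδ' : 0 < δ') (he : ∀ y ∈ Set.Ioc (z - δ') z, f y = f' y) : HasLeftSlope f' z s := by
  obtain ⟨δ, hδ, H⟩ := h
  have hz : f z = f' z := he z ⟨by linarith, le_refl z⟩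
  refine ⟨min δ δ', lt_min hδ hδ', fun y hy => ?_⟩
  obtain ⟨hy1, hy2⟩ := hy
  have l1 : z - δ ≤ z - min δ δ' := by linarith [min_le_left δ δ']
  have l2 : z - δ' ≤ z - min δ δ' := by linarith [min_le_right δ δ']
  rw [← he y ⟨lt_of_le_of_lt l2 hy1, hy2⟩, ← hz, H y ⟨lt_of_le_of_lt l1 hy1, hy2⟩]

lemma HasRightSlope.comp_mul {g : ℝ → ℝ} {z s : ℝ} (c : ℝ) (hc : 0 < c)
    (h : HasRightSlope g (c * z) s) : HasRightSlope (fun y => g (c * y)) z (c * s) := by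
  obtain ⟨δ, hδ, H⟩ := h
  refine ⟨δ / c, by positivity, fun y hy => ?_⟩
  obtain ⟨hy1, hy2⟩ := hy
  have hkey : c * y ∈ Set.Ico (c * z) (c * z + δ) := by
    refine ⟨mul_le_mul_of_nonneg_left hy1 hc.le, ?_⟩
    have h2 := mul_lt_mul_of_pos_left hy2 hc
    rw [mul_add, mul_div_cancel₀ _ hc.ne'] at h2
    linarith
  show g (c * y) = g (c * z) + c * s * (y - z)
  rw [H _ hkey]; ring

lemma HasLeftSlope.comp_mul {g : ℝ → ℝ} {z s : ℝ} (c : ℝ) (hc : 0 < c)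
    (h : HasLeftSlope g (c * z) s) : HasLeftSlope (fun y => g (c * y)) z (c * s) := by
  obtain ⟨δ, hδ, H⟩ := h
  refine ⟨δ / c, by positivity, fun y hy => ?_⟩
  obtain ⟨hy1, hy2⟩ := hy
  have hkey : c * y ∈ Set.Ioc (c * z - δ) (c * z) := by
    refine ⟨?_, mul_le_mul_of_nonneg_left hy2 hc.le⟩
    have h2 := mul_lt_mul_of_pos_left hy1 hc
    rw [mul_sub, mul_div_cancel₀ _ hc.ne'] at h2
    linarith
  show g (c * y) = g (c * z) + c * s * (y - z)
  rw [H _ hkey]; ring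

lemma hasRightSlope_unique {f : ℝ → ℝ} {z s r : ℝ} (hs : HasRightSlope f z s)
    (hr : HasRightSlope f z r) : s = r := by
  obtain ⟨δ1, h1, H1⟩ := hs; obtain ⟨δ2, h2, H2⟩ := hr
  set y := z + min δ1 δ2 / 2 with hy
  have hmin : 0 < min δ1 δ2 := lt_min h1 h2
  have hy1 : y ∈ Set.Ico z (z + δ1) := ⟨by rw [hy]; linarith, by rw [hy]; linarith [min_le_left δ1 δ2]⟩
  have hy2 : y ∈ Set.Ico z (z + δ2) := ⟨by rw [hy]; linarith, by rw [hy]; linarith [min_le_right δ1 δ2]⟩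
  have := (H1 y hy1).symm.trans (H2 y hy2)
  have hyz : y - z = min δ1 δ2 / 2 := by rw [hy]; ring
  rw [hyz] at this
  have : s * (min δ1 δ2 / 2) = r * (min δ1 δ2 / 2) := by linarith
  exact mul_right_cancel₀ (by positivity) this

lemma hasLeftSlope_unique {f : ℝ → ℝ} {z s r : ℝ} (hs : HasLeftSlope f z s)
    (hr : HasLeftSlope f z r) : s = r := by
  obtain ⟨δ1, h1, H1⟩ := hs; obtain ⟨δ2, h2, H2⟩ := hr
  set y := z - min δ1 δ2 / 2 with hy
  have hmin : 0 < min δ1 δ2 := lt_min h1 h2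
  have hy1 : y ∈ Set.Ioc (z - δ1) z := ⟨by rw [hy]; linarith [min_le_left δ1 δ2], by rw [hy]; linarith⟩
  have hy2 : y ∈ Set.Ioc (z - δ2) z := ⟨by rw [hy]; linarith [min_le_right δ1 δ2], by rw [hy]; linarith⟩
  have := (H1 y hy1).symm.trans (H2 y hy2)
  have hyz : y - z = -(min δ1 δ2 / 2) := by rw [hy]; ring
  rw [hyz] at this
  have : s * (min δ1 δ2 / 2) = r * (min δ1 δ2 / 2) := by linarith
  exact mul_right_cancel₀ (by positivity) this

lemma hasOrdAt_eq {f : ℝ → ℝ} {z d sp sm : ℝ} (hp : HasRightSlope f z sp)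
    (hm : HasLeftSlope f z sm) (h : HasOrdAt f z d) : d = z * (sp - sm) := by
  obtain ⟨sp', sm', hp', hm', hd⟩ := h
  rw [hd, hasRightSlope_unique hp' hp, hasLeftSlope_unique hm' hm]


lemma pw_of_breaks (S : Set ℝ) (f : ℝ → ℝ) (β : ℤ → ℝ)
    (hβ : ∀ k, β k < β (k + 1))
    (hlow : ∀ u : ℝ, 0 < u → ∃ k, β k ≤ u)
    (hhigh : ∀ v : ℝ, ∃ k, v < β k)
    (haff : ∀ k : ℤ, ∃ s ∈ S, ∃ c : ℝ, ∀ x ∈ Set.Icc (β k) (β (k + 1)), f x = s * x + c) :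
    PiecewiseAffineWith S f := by
  have hmono : StrictMono β := strictMono_int_of_lt_succ hβ
  intro u v hu huv
  obtain ⟨K, hK⟩ := hhigh v
  have hbddu : ∃ b : ℤ, ∀ k : ℤ, β k ≤ u → k ≤ b := by
    refine ⟨K, fun k hk => ?_⟩
    by_contra h
    push_neg at h
    exact absurd hk (by push_neg; exact lt_of_lt_of_le (by linarith) (hmono.le_iff_le.2 h.le))
  obtain ⟨k₁, hk₁u, hk₁max⟩ := Int.exists_greatest_of_bdd hbddu (hlow u hu)
  have hbddv : ∃ b : ℤ, ∀ k : ℤ, v ≤ β k → b ≤ k := by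
    refine ⟨k₁, fun k hk => ?_⟩
    by_contra h
    push_neg at h
    have : β k < β k₁ := hmono h
    linarith
  obtain ⟨k₂, hk₂v, hk₂min⟩ := Int.exists_least_of_bdd hbddv ⟨K, hK.le⟩
  have hk12 : k₁ < k₂ := by
    by_contra h
    push_neg at h
    have : β k₂ ≤ β k₁ := hmono.le_iff_le.2 h
    linarith
  have hu1 : u < β (k₁ + 1) := by
    by_contra h
    push_neg at h
    have := hk₁max _ h
    omega
  have hv1 : β (k₂ - 1) < v := by
    by_contra h
    push_neg at h
    have := hk₂min _ h
    omega
  set m := (k₂ - k₁).toNat with hmdef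
  have hmk : (m : ℤ) = k₂ - k₁ := Int.toNat_of_nonneg (by omega)
  have hm0 : 0 < m := by omega
  refine ⟨m, fun i => if i = 0 then u else if m ≤ i then v else β (k₁ + i), hm0,
    by simp, by simp [hm0.ne'], ?_, ?_⟩
  · intro i hi
    rcases Nat.eq_zero_or_pos i with rfl | hipos
    · simp only [if_pos rfl]
      rcases eq_or_lt_of_le (Nat.one_le_iff_ne_zero.2 hm0.ne') with h1 | h1
      · simp only [if_neg one_ne_zero, if_pos (le_of_eq h1.symm)]
        exact huv
      · simp only [if_neg one_ne_zero, if_neg (by omega : ¬ m ≤ 1)]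
        simpa using hu1
    · have hi0 : i ≠ 0 := hipos.ne'
      simp only [if_neg hi0, if_neg (by omega : ¬ m ≤ i), if_neg (by omega : ¬ i + 1 = 0)]
      rcases eq_or_lt_of_le (Nat.succ_le_of_lt hi) with h1 | h1
      · simp only [if_pos (le_of_eq h1.symm)]
        have : k₁ + (i : ℤ) = k₂ - 1 := by omega
        rw [this]
        exact hv1
      · simp only [if_neg (by omega : ¬ m ≤ i + 1)]
        have hc2 : (((i + 1 : ℕ)) : ℤ) = (i : ℤ) + 1 := by push_cast; ring
        rw [hc2, ← add_assoc]
        exact hβ _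
  · intro i hi
    obtain ⟨s, hs, c, hc⟩ := haff (k₁ + i)
    refine ⟨s, hs, c, fun x hx => hc x ⟨le_trans ?_ hx.1, le_trans hx.2 ?_⟩⟩
    · rcases Nat.eq_zero_or_pos i with rfl | hipos
      · simpa using hk₁u
      · simp only [if_neg hipos.ne', if_neg (by omega : ¬ m ≤ i)]
        exact le_refl _
    · rcases eq_or_lt_of_le (Nat.succ_le_of_lt hi) with h1 | h1
      · simp only [if_neg (by omega : ¬ i + 1 = 0), if_pos (le_of_eq h1.symm)]
        have : k₁ + (i : ℤ) + 1 = k₂ := by omega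
        rw [this]
        exact hk₂v
      · simp only [if_neg (by omega : ¬ i + 1 = 0), if_neg (by omega : ¬ m ≤ i + 1)]
        have hc2 : (((i + 1 : ℕ)) : ℤ) = (i : ℤ) + 1 := by push_cast; ring
        rw [hc2, ← add_assoc]

set_option maxHeartbeats 800000

theorem part1 (p : ℕ) (hp : p.Prime) (n : ℕ) (hn : 1 ≤ n) (lam a : ℕ → ℝ)
    (hlam0 : 0 < lam 0)
    (hmono : ∀ j, j + 1 < n → lam j < lam (j + 1))
    (hlt : lam (n - 1) < p * lam 0)
    (hdeg : (∑ j ∈ Finset.range n, a j * lam j) < 0) :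
    ¬ ∃ f : ℝ → ℝ, KCp p f ∧ SolvesRR p n lam a f := by
  rintro ⟨f, ⟨hfc, hfpw, hfper⟩, hRR1, hRR2⟩
  classical
  have hp1 : (1:ℝ) < p := by exact_mod_cast hp.one_lt
  have hpl : lam 0 < (p:ℝ) * lam 0 := by nlinarith
  -- lam facts
  have lmono : ∀ i j : ℕ, i < j → j < n → lam i < lam j := by
    intro i j hij hjn
    have key : ∀ j : ℕ, i + 1 ≤ j → j < n → lam i < lam j := by
      intro j hj
      induction j, hj using Nat.le_induction with
      | base => intro h; exact hmono i h
      | succ k hk ih => intro hkm; exact lt_trans (ih (by omega)) (hmono k (by omega))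
    exact key j hij hjn
  have lam_inj : ∀ i j : ℕ, i < n → j < n → lam i = lam j → i = j := by
    intro i j hi hj he
    by_contra hne
    rcases lt_or_gt_of_ne hne with h | h
    · exact absurd he (lmono i j h hj).ne
    · exact absurd he.symm (lmono j i h hi).ne
  have lam_lt_top : ∀ j, j < n → lam j < (p:ℝ) * lam 0 := by
    intro j hj
    rcases eq_or_lt_of_le (by omega : j ≤ n - 1) with h | h
    · rw [h]; exact hlt
    · exact lt_trans (lmono j (n-1) h (by omega)) hlt
  have lam_ge : ∀ j, j < n → lam 0 ≤ lam j := by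
    intro j hj
    rcases Nat.eq_zero_or_pos j with rfl | h
    · exact le_refl _
    · exact (lmono 0 j h hj).le
  -- partition
  obtain ⟨m, t, hm0, ht0, htm, htlt, haff⟩ := hfpw (lam 0) ((p:ℝ) * lam 0) hlam0 hpl
  obtain ⟨m', rfl⟩ : ∃ m'', m = m'' + 1 := ⟨m - 1, by omega⟩
  choose! s hsS c hc using haff
  have tmono : ∀ i j : ℕ, i < j → j ≤ m' + 1 → t i < t j := by
    intro i j hij hjm
    have key : ∀ j : ℕ, i + 1 ≤ j → j ≤ m' + 1 → t i < t j := by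
      intro j hj
      induction j, hj using Nat.le_induction with
      | base => intro h; exact htlt i (by omega)
      | succ k hk ih => intro hkm; exact lt_trans (ih (by omega)) (htlt k (by omega))
    exact key j hij hjm
  have ht_ge : ∀ i, i ≤ m' + 1 → lam 0 ≤ t i := by
    intro i hi
    rcases Nat.eq_zero_or_pos i with rfl | h
    · rw [ht0]
    · rw [← ht0]; exact (tmono 0 i h hi).le
  have ht_lt : ∀ i, i < m' + 1 → t i < (p:ℝ) * lam 0 := by
    intro i hi
    rw [← htm]; exact tmono i (m'+1) hi (le_refl _)
  -- values
  have hval1 : ∀ i, i < m' + 1 → f (t i) = s i * t i + c i := fun i hi =>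
    hc i hi (t i) ⟨le_refl _, (htlt i hi).le⟩
  have hval2 : ∀ i, i < m' + 1 → f (t (i+1)) = s i * t (i+1) + c i := fun i hi =>
    hc i hi (t (i+1)) ⟨(htlt i hi).le, le_refl _⟩
  have hper0 : f ((p:ℝ) * lam 0) = f (lam 0) := hfper (lam 0) hlam0
  -- slopes
  have hRight : ∀ i, i < m' + 1 → HasRightSlope f (t i) (s i) := by
    intro i hi
    refine ⟨t (i+1) - t i, by linarith [htlt i hi], fun y hy => ?_⟩
    rw [hc i hi y ⟨hy.1, by linarith [hy.2]⟩, hval1 i hi]; ring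
  have hLeftSucc : ∀ i, i < m' + 1 → HasLeftSlope f (t (i+1)) (s i) := by
    intro i hi
    refine ⟨t (i+1) - t i, by linarith [htlt i hi], fun y hy => ?_⟩
    rw [hc i hi y ⟨by linarith [hy.1], hy.2⟩, hval2 i hi]; ring
  have hLeft0 : HasLeftSlope f (lam 0) ((p:ℝ) * s m') := by
    have hm'lt : t m' < (p:ℝ) * lam 0 := ht_lt m' (by omega)
    have hppos : (0:ℝ) < p := by linarith
    have htm'pos : 0 < t m' := lt_of_lt_of_le hlam0 (ht_ge m' (by omega))
    refine ⟨lam 0 - t m' / p, by rw [sub_pos, div_lt_iff₀ hppos]; linarith, fun y hy => ?_⟩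
    obtain ⟨hy1, hy2⟩ := hy
    have hy1' : t m' < (p:ℝ) * y := by
      have h' : t m' / p < y := by linarith
      rw [div_lt_iff₀ hppos] at h'
      linarith
    have hypos : 0 < y := by
      have : 0 < t m' / p := by positivity
      linarith
    have hy2' : (p:ℝ) * y ≤ (p:ℝ) * lam 0 := by nlinarith
    have e1 : f y = f ((p:ℝ) * y) := (hfper y hypos).symm
    have e2 : f ((p:ℝ) * y) = s m' * ((p:ℝ) * y) + c m' := by
      have := hc m' (by omega) ((p:ℝ) * y) ⟨hy1'.le, by rw [htm] at *; exact hy2'⟩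
      exact this
    have e3 : f (lam 0) = s m' * ((p:ℝ) * lam 0) + c m' := by
      rw [← hper0, ← htm]
      exact hval2 m' (by omega)
    rw [e1, e2, e3]; ring
  -- orders at breakpoints
  set d : ℕ → ℝ := fun i => if i = 0 then lam 0 * (s 0 - (p:ℝ) * s m') else t i * (s i - s (i-1))
    with hddef
  have hOrd : ∀ i, i < m' + 1 → HasOrdAt f (t i) (d i) := by
    intro i hi
    rcases Nat.eq_zero_or_pos i with rfl | hpos
    · refine ⟨s 0, (p:ℝ) * s m', hRight 0 hi, by rw [ht0]; exact hLeft0, by simp [hddef, ht0]⟩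
    · obtain ⟨i', rfl⟩ : ∃ i'', i = i'' + 1 := ⟨i - 1, by omega⟩
      exact ⟨s (i'+1), s i', hRight _ hi, hLeftSucc i' (by omega), by simp [hddef]⟩
  -- telescoping sum of orders is zero
  have hd1 : ∀ i : ℕ, d (i+1) = t (i+1) * s (i+1) - t (i+1) * s i := by
    intro i; simp only [hddef, if_neg (Nat.succ_ne_zero i), Nat.add_sub_cancel]; ring
  have key : ∀ i : ℕ, i < m' + 1 → s i * (t (i+1) - t i) = f (t (i+1)) - f (t i) := by
    intro i hi; rw [hval1 i hi, hval2 i hi]; ring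
  have tele : ∑ i ∈ Finset.range (m'+1), s i * (t (i+1) - t i) = 0 := by
    rw [Finset.sum_congr rfl fun i hi => key i (Finset.mem_range.1 hi),
      Finset.sum_range_sub (fun i => f (t i)), htm, ht0, hper0, sub_self]
  have e2 : ∑ i ∈ Finset.range (m'+1), s i * (t (i+1) - t i)
      = ((∑ i ∈ Finset.range m', t (i+1) * s i) + t (m'+1) * s m')
        - ((∑ i ∈ Finset.range m', t (i+1) * s (i+1)) + t 0 * s 0) := by
    rw [Finset.sum_congr rfl (fun i _ => by ring :
        ∀ i ∈ Finset.range (m'+1), s i * (t (i+1) - t i) = t (i+1) * s i - t i * s i),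
      Finset.sum_sub_distrib, Finset.sum_range_succ (fun i => t (i+1) * s i) m',
      Finset.sum_range_succ' (fun i => t i * s i) m']
  have e1 : ∑ i ∈ Finset.range (m'+1), d i
      = ((∑ i ∈ Finset.range m', t (i+1) * s (i+1)) - (∑ i ∈ Finset.range m', t (i+1) * s i))
        + lam 0 * (s 0 - (p:ℝ) * s m') := by
    rw [Finset.sum_range_succ' d m', Finset.sum_congr rfl fun i _ => hd1 i,
      Finset.sum_sub_distrib]
    simp [hddef]
  have hsum : ∑ i ∈ Finset.range (m'+1), d i = 0 := by
    rw [e2] at tele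
    rw [htm] at tele
    rw [ht0] at tele
    rw [e1]
    linarith
  -- matching between divisor points and breakpoints
  set P : ℕ → Prop := fun j => ∃ i, i < m' + 1 ∧ t i = lam j with hPdef
  set ι : ℕ → ℕ := fun j => if h : P j then h.choose else 0 with hιdef
  have hι : ∀ j, P j → ι j < m' + 1 ∧ t (ι j) = lam j := by
    intro j hj
    simp only [hιdef, dif_pos hj]
    exact hj.choose_spec
  set φ : ℕ → ℝ := fun j => if P j then d (ι j) else 0 with hφdef
  have hOrdLam : ∀ j, j < n → HasOrdAt f (lam j) (φ j) := by
    intro j hj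
    by_cases hPj : P j
    · obtain ⟨hι1, hι2⟩ := hι j hPj
      rw [← hι2]
      simp only [hφdef, if_pos hPj]
      exact hOrd (ι j) hι1
    · have h1 : lam 0 ≤ lam j := lam_ge j hj
      have h2 : lam j < (p:ℝ) * lam 0 := lam_lt_top j hj
      set F := (Finset.range (m'+2)).filter (fun i => t i ≤ lam j) with hFdef
      have hF0 : 0 ∈ F := by
        simp only [hFdef, Finset.mem_filter, Finset.mem_range]
        exact ⟨by omega, by rw [ht0]; exact h1⟩
      set i0 := F.max' ⟨0, hF0⟩ with hi0def
      have hi0F : i0 ∈ F := Finset.max'_mem _ _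
      have hi0le : i0 < m' + 2 ∧ t i0 ≤ lam j := by
        simpa only [hFdef, Finset.mem_filter, Finset.mem_range] using hi0F
      have hi0m : i0 < m' + 1 := by
        rcases eq_or_lt_of_le (by omega : i0 ≤ m' + 1) with h | h
        · exfalso; have := hi0le.2; rw [h, htm] at this; linarith
        · exact h
      have hlt1 : t i0 < lam j := lt_of_le_of_ne hi0le.2 (fun he => hPj ⟨i0, hi0m, he⟩)
      have hlt2 : lam j < t (i0+1) := by
        by_contra hcon
        push_neg at hcon
        have hmem : i0 + 1 ∈ F := by
          simp only [hFdef, Finset.mem_filter, Finset.mem_range]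
          exact ⟨by omega, hcon⟩
        have := Finset.le_max' F _ hmem
        omega
      refine ⟨s i0, s i0, ?_, ?_, by simp only [hφdef, if_neg hPj]; ring⟩
      · refine ⟨t (i0+1) - lam j, by linarith, fun y hy => ?_⟩
        rw [hc i0 hi0m y ⟨by linarith [hy.1], by linarith [hy.2]⟩,
          hc i0 hi0m (lam j) ⟨hlt1.le, hlt2.le⟩]
        ring
      · refine ⟨lam j - t i0, by linarith, fun y hy => ?_⟩
        rw [hc i0 hi0m y ⟨by linarith [hy.1], by linarith [hy.2]⟩,
          hc i0 hi0m (lam j) ⟨hlt1.le, hlt2.le⟩]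
        ring
  have hφsum : ∑ j ∈ Finset.range n, φ j ≤ ∑ i ∈ Finset.range (m'+1), d i := by
    have e3 : ∑ j ∈ Finset.range n, φ j = ∑ j ∈ (Finset.range n).filter P, d (ι j) := by
      rw [Finset.sum_filter]
    rw [e3]
    have hinj : ∀ x ∈ (Finset.range n).filter P, ∀ y ∈ (Finset.range n).filter P,
        ι x = ι y → x = y := by
      intro x hx y hy hxy
      simp only [Finset.mem_filter, Finset.mem_range] at hx hy
      exact lam_inj x y hx.1 hy.1 (by rw [← (hι x hx.2).2, ← (hι y hy.2).2, hxy])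
    rw [← Finset.sum_image hinj]
    apply Finset.sum_le_sum_of_subset_of_nonneg
    · intro i hi
      simp only [Finset.mem_image, Finset.mem_filter, Finset.mem_range] at hi
      obtain ⟨j, ⟨hjn, hPj⟩, rfl⟩ := hi
      exact Finset.mem_range.2 (hι j hPj).1
    · intro i hi hni
      have him : i < m' + 1 := Finset.mem_range.1 hi
      have hne : ∀ j, j < n → t i ≠ lam j := by
        intro j hjn he
        apply hni
        have hPj : P j := ⟨i, him, he⟩
        simp only [Finset.mem_image, Finset.mem_filter, Finset.mem_range]
        refine ⟨j, ⟨hjn, hPj⟩, ?_⟩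
        obtain ⟨hι1, hι2⟩ := hι j hPj
        by_contra hne2
        rcases lt_or_gt_of_ne hne2 with h | h
        · exact absurd (hι2.trans he.symm) (tmono (ι j) i h (by omega)).ne
        · exact absurd (he.trans hι2.symm) (tmono i (ι j) h (by omega)).ne
      exact hRR2 (t i) ⟨ht_ge i (by omega), ht_lt i him⟩ hne (d i) (hOrd i him)
  have hmain : ∀ j ∈ Finset.range n, 0 ≤ a j * lam j + φ j := fun j hj =>
    hRR1 j (Finset.mem_range.1 hj) (φ j) (hOrdLam j (Finset.mem_range.1 hj))
  have hfin : 0 ≤ ∑ j ∈ Finset.range n, (a j * lam j + φ j) := Finset.sum_nonneg hmain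
  rw [Finset.sum_add_distrib] at hfin
  linarith


set_option maxHeartbeats 1600000 in
theorem part2 (p : ℕ) (hp : p.Prime) (n : ℕ) (hn : 1 ≤ n) (lam a : ℕ → ℝ)
    (hlam0 : 0 < lam 0)
    (hmono : ∀ j, j + 1 < n → lam j < lam (j + 1))
    (hlt : lam (n - 1) < p * lam 0)
    (ha : ∀ j, j < n → a j ∈ HpSet p)
    (hdeg : 0 < (∑ j ∈ Finset.range n, a j * lam j)) :
    ∃ f : ℝ → ℝ, KCp p f ∧ SolvesRR p n lam a f := by
  classical
  have hp1 : (1:ℝ) < p := by exact_mod_cast hp.one_lt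
  have hppos : (0:ℝ) < p := by linarith
  have hpne : (p:ℝ) ≠ 0 := hppos.ne'
  have hpl : lam 0 < (p:ℝ) * lam 0 := by nlinarith
  have lmono : ∀ i j : ℕ, i < j → j < n → lam i < lam j := by
    intro i j hij hjn
    have key : ∀ j : ℕ, i + 1 ≤ j → j < n → lam i < lam j := by
      intro j hj
      induction j, hj using Nat.le_induction with
      | base => intro h; exact hmono i h
      | succ k hk ih => intro hkm; exact lt_trans (ih (by omega)) (hmono k (by omega))
    exact key j hij hjn
  have lam_inj : ∀ i j : ℕ, i < n → j < n → lam i = lam j → i = j := by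
    intro i j hi hj he
    by_contra hne
    rcases lt_or_gt_of_ne hne with h | h
    · exact absurd he (lmono i j h hj).ne
    · exact absurd he.symm (lmono j i h hi).ne
  have lam_le_top : ∀ j, j < n → lam j ≤ lam (n-1) := by
    intro j hj
    rcases eq_or_lt_of_le (by omega : j ≤ n - 1) with h | h
    · rw [h]
    · exact (lmono j (n-1) h (by omega)).le
  have lam_lt_top : ∀ j, j < n → lam j < (p:ℝ) * lam 0 :=
    fun j hj => lt_of_le_of_lt (lam_le_top j hj) hlt
  -- constants
  set degD := ∑ j ∈ Finset.range n, a j * lam j with hdegD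
  set S1 := ∑ j ∈ Finset.Ico 1 n, a j * ((p:ℝ) * lam 0 - lam j) with hS1def
  set S2 := ∑ j ∈ Finset.Ico 1 n, a j * lam j with hS2def
  set A' := ∑ j ∈ Finset.Ico 1 n, a j with hA'def
  set L := ((p:ℝ) - 1) * lam 0 with hLdef
  have hLpos : 0 < L := by rw [hLdef]; nlinarith
  have hS1split : S1 = (p:ℝ) * lam 0 * A' - S2 := by
    rw [hS1def, hA'def, hS2def, Finset.mul_sum, ← Finset.sum_sub_distrib]
    exact Finset.sum_congr rfl fun j _ => by ring
  have hdegsplit : degD = a 0 * lam 0 + S2 := by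
    rw [hdegD, hS2def, Finset.range_eq_Ico, Finset.sum_eq_sum_Ico_succ_bot (by omega : 0 < n)]
  set tval := S1 / L with htvaldef
  have htvalL : tval * L = S1 := div_mul_cancel₀ S1 hLpos.ne'
  -- choose η and τ
  have hdpos : 0 < degD / ((p:ℝ) * lam 0) := by positivity
  obtain ⟨η, hηH, hη0, hηlt⟩ := hp_dense hp 0 (degD / ((p:ℝ) * lam 0)) hdpos
  set Δ := (p:ℝ) * lam 0 - lam (n-1) with hΔdef
  have hΔpos : 0 < Δ := by rw [hΔdef]; linarith
  obtain ⟨τ, hτH, hτ1, hτ2⟩ := hp_dense hp (tval - η * Δ / L) tval (by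
    have : 0 < η * Δ / L := by positivity
    linarith)
  set x := (p:ℝ) * lam 0 - (tval - τ) * L / η with hxdef
  have hτtv : 0 < tval - τ := by linarith
  have hx2 : x < (p:ℝ) * lam 0 := by
    rw [hxdef]
    have : 0 < (tval - τ) * L / η := by positivity
    linarith
  have hx1 : lam (n-1) < x := by
    have h2 : tval - τ < η * Δ / L := by linarith
    rw [lt_div_iff₀ hLpos] at h2
    have h3 : (tval - τ) * L / η < Δ := by
      rw [div_lt_iff₀ hη0]
      linarith
    rw [hxdef]
    rw [hΔdef] at h3
    linarith
  have hxgt : ∀ j, j < n → lam j < x := fun j hj => lt_of_le_of_lt (lam_le_top j hj) hx1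
  have hx0 : lam 0 < x := hxgt 0 (by omega)
  have hηp : η * ((p:ℝ) * lam 0) < degD := by
    rw [lt_div_iff₀ (by positivity : (0:ℝ) < (p:ℝ) * lam 0)] at hηlt
    exact hηlt
  -- the function on the fundamental domain
  set g : ℝ → ℝ := fun z => τ * (z - lam 0)
      + (∑ j ∈ Finset.Ico 1 n, (-a j) * max 0 (z - lam j)) + η * max 0 (z - x) with hgdef
  have hgl0 : g (lam 0) = 0 := by
    simp only [hgdef]
    rw [Finset.sum_eq_zero (fun j hj => by
      obtain ⟨hj1, hj2⟩ := Finset.mem_Ico.1 hj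
      rw [max_eq_left (by linarith [lmono 0 j hj1 hj2] : lam 0 - lam j ≤ 0)]; ring),
      max_eq_left (by linarith : lam 0 - x ≤ 0)]
    ring
  have hgp : g ((p:ℝ) * lam 0) = 0 := by
    simp only [hgdef]
    rw [Finset.sum_congr rfl (fun j hj => by
      obtain ⟨hj1, hj2⟩ := Finset.mem_Ico.1 hj
      rw [max_eq_right (by linarith [lam_lt_top j hj2] : (0:ℝ) ≤ (p:ℝ) * lam 0 - lam j)]),
      max_eq_right (by linarith : (0:ℝ) ≤ (p:ℝ) * lam 0 - x)]
    have hsum : ∑ j ∈ Finset.Ico 1 n, -a j * ((p:ℝ) * lam 0 - lam j) = -S1 := by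
      rw [hS1def, ← Finset.sum_neg_distrib]
      exact Finset.sum_congr rfl fun j _ => by ring
    rw [hsum]
    have hxe : η * ((p:ℝ) * lam 0 - x) = (tval - τ) * L := by
      rw [hxdef]
      field_simp
      ring
    have hLe : τ * ((p:ℝ) * lam 0 - lam 0) = τ * L := by rw [hLdef]; ring
    have expand : τ * ((p:ℝ) * lam 0 - lam 0) + -S1 + η * ((p:ℝ) * lam 0 - x)
        = τ * L + -S1 + (tval - τ) * L := by rw [hLe, hxe]
    rw [expand]
    nlinarith [htvalL]
  -- slopes of g
  set sR : ℝ → ℝ := fun z => τ + (∑ j ∈ Finset.Ico 1 n, if lam j ≤ z then -a j else 0)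
      + (if x ≤ z then η else 0) with hsRdef
  set sL : ℝ → ℝ := fun z => τ + (∑ j ∈ Finset.Ico 1 n, if lam j < z then -a j else 0)
      + (if x < z then η else 0) with hsLdef
  have hgR : ∀ z, HasRightSlope g z (sR z) := by
    intro z
    simp only [hgdef, hsRdef]
    exact ((hasRightSlope_linear τ (lam 0) z).add
      (hasRightSlope_sum _ _ _ (fun j _ => hasRightSlope_hinge (-a j) (lam j) z))).add
      (hasRightSlope_hinge η x z)
  have hgL : ∀ z, HasLeftSlope g z (sL z) := by
    intro z
    simp only [hgdef, hsLdef]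
    exact ((hasLeftSlope_linear τ (lam 0) z).add
      (hasLeftSlope_sum _ _ _ (fun j _ => hasLeftSlope_hinge (-a j) (lam j) z))).add
      (hasLeftSlope_hinge η x z)
  -- the global function
  set f : ℝ → ℝ := fun y => g (y / (p:ℝ) ^ (Int.log p (y / lam 0))) with hfdef
  have hlog : ∀ (k : ℤ) (y : ℝ), (p:ℝ)^k * lam 0 ≤ y → y < (p:ℝ)^(k+1) * lam 0 →
      Int.log p (y / lam 0) = k := by
    intro k y h1 h2
    have hpk : (0:ℝ) < (p:ℝ)^k := zpow_pos hppos k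
    have hy0 : 0 < y := lt_of_lt_of_le (by positivity) h1
    have hq : 0 < y / lam 0 := by positivity
    have e1 : ((p:ℕ):ℝ)^k ≤ y / lam 0 := by rw [le_div_iff₀ hlam0]; exact h1
    have e2 : y / lam 0 < ((p:ℕ):ℝ)^(k+1) := by rw [div_lt_iff₀ hlam0]; exact h2
    have l1 := (Int.zpow_le_iff_le_log hp.one_lt hq).1 e1
    have l2 := (Int.lt_zpow_iff_log_lt hp.one_lt hq).1 e2
    omega
  have hfval : ∀ (k : ℤ) (y : ℝ), (p:ℝ)^k * lam 0 ≤ y → y ≤ (p:ℝ)^(k+1) * lam 0 →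
      f y = g (y / (p:ℝ)^k) := by
    intro k y h1 h2
    rcases lt_or_eq_of_le h2 with h2' | h2'
    · simp only [hfdef]
      rw [hlog k y h1 h2']
    · have hlog2 : Int.log p (y / lam 0) = k + 1 := by
        apply hlog (k+1) y (le_of_eq h2'.symm)
        rw [h2', zpow_add_one₀ hpne (k+1)]
        nlinarith [zpow_pos hppos (k+1)]
      have ey1 : y / (p:ℝ)^(k+1) = lam 0 := by
        rw [h2']
        field_simp
      have ey2 : y / (p:ℝ)^k = (p:ℝ) * lam 0 := by
        rw [h2', zpow_add_one₀ hpne k]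
        field_simp [(zpow_pos hppos k).ne']
      simp only [hfdef]
      rw [hlog2, ey1, ey2, hgl0, hgp]
  have hfper : ∀ y : ℝ, 0 < y → f ((p:ℝ) * y) = f y := by
    intro y hy0
    set k := Int.log p (y / lam 0) with hkdef
    have hq : 0 < y / lam 0 := by positivity
    have hb1 : (p:ℝ)^k * lam 0 ≤ y := by
      have := Int.zpow_log_le_self hp.one_lt hq
      rw [le_div_iff₀ hlam0] at this
      exact this
    have hb2 : y < (p:ℝ)^(k+1) * lam 0 := by
      have := Int.lt_zpow_succ_log_self hp.one_lt (y / lam 0)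
      rw [div_lt_iff₀ hlam0] at this
      exact this
    have hlogp : Int.log p ((p:ℝ) * y / lam 0) = k + 1 := by
      apply hlog (k+1) ((p:ℝ)*y)
      · rw [zpow_add_one₀ hpne k]
        nlinarith
      · rw [zpow_add_one₀ hpne (k+1)]
        nlinarith
    simp only [hfdef]
    rw [hlogp, ← hkdef]
    congr 1
    rw [zpow_add_one₀ hpne k]
    field_simp [(zpow_pos hppos k).ne']
  have hf_eq : ∀ y, lam 0 ≤ y → y ≤ (p:ℝ) * lam 0 → f y = g y := by
    intro y h1 h2
    have := hfval 0 y (by rw [zpow_zero, one_mul]; exact h1) (by rw [show ((0:ℤ)+1) = (1:ℤ) by ring, zpow_one]; exact h2)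
    rw [zpow_zero, div_one] at this
    exact this
  -- slopes of f on the fundamental domain
  have hfR : ∀ z, lam 0 ≤ z → z < (p:ℝ) * lam 0 → HasRightSlope f z (sR z) := by
    intro z h1 h2
    exact (hgR z).congr ((p:ℝ) * lam 0 - z) (by linarith)
      (fun y hy => (hf_eq y (le_trans h1 hy.1) (by linarith [hy.2])).symm)
  have hfL : ∀ z, lam 0 < z → z ≤ (p:ℝ) * lam 0 → HasLeftSlope f z (sL z) := by
    intro z h1 h2
    exact (hgL z).congr (z - lam 0) (by linarith)
      (fun y hy => (hf_eq y (by linarith [hy.1]) (by linarith [hy.2])).symm)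
  have hfL0 : HasLeftSlope f (lam 0) ((p:ℝ) * sL ((p:ℝ) * lam 0)) := by
    have base : HasLeftSlope (fun y => g ((p:ℝ) * y)) (lam 0) ((p:ℝ) * sL ((p:ℝ) * lam 0)) :=
      HasLeftSlope.comp_mul (p:ℝ) hppos (hgL ((p:ℝ) * lam 0))
    have hδ : 0 < lam 0 - lam 0 / p := by
      rw [sub_pos, div_lt_iff₀ hppos]
      nlinarith
    apply base.congr (lam 0 - lam 0 / p) hδ
    intro y hy
    obtain ⟨hy1, hy2⟩ := hy
    have hylo : (p:ℝ)^(-1:ℤ) * lam 0 ≤ y := by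
      have h' : lam 0 / p < y := by linarith
      calc (p:ℝ)^(-1:ℤ) * lam 0 = lam 0 / p := by
            rw [zpow_neg, zpow_one]; ring
        _ ≤ y := h'.le
    have hyhi : y ≤ (p:ℝ)^((-1:ℤ)+1) * lam 0 := by
      rw [show ((-1:ℤ)+1) = 0 by ring, zpow_zero, one_mul]
      exact hy2
    rw [hfval (-1) y hylo hyhi]
    congr 1
    rw [zpow_neg, zpow_one, div_eq_mul_inv, inv_inv]
    ring
  -- Riemann-Roch conditions
  have rr1 : ∀ j, j < n → ∀ d : ℝ, HasOrdAt f (lam j) d → 0 ≤ a j * lam j + d := by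
    intro j hj d hd
    rcases Nat.eq_zero_or_pos j with rfl | hjpos
    · have hcomp := hasOrdAt_eq (hfR (lam 0) (le_refl _) hpl) hfL0 hd
      have hsR0 : sR (lam 0) = τ := by
        simp only [hsRdef]
        rw [Finset.sum_eq_zero (fun i hi => by
          obtain ⟨hi1, hi2⟩ := Finset.mem_Ico.1 hi
          rw [if_neg (not_le.2 (lmono 0 i hi1 hi2))]), if_neg (not_le.2 hx0)]
        ring
      have hsLp : sL ((p:ℝ) * lam 0) = τ - A' + η := by
        simp only [hsLdef]
        rw [Finset.sum_congr rfl (fun i hi => by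
          rw [if_pos (lam_lt_top i (Finset.mem_Ico.1 hi).2)]), if_pos hx2,
          Finset.sum_neg_distrib, hA'def]
        ring
      rw [hcomp, hsR0, hsLp]
      have key2 : τ * (((p:ℝ)-1) * lam 0) ≤ S1 := by
        have h := mul_le_mul_of_nonneg_right hτ2.le hLpos.le
        rw [htvalL] at h
        rw [hLdef] at h
        exact h
      linarith [key2, hS1split, hdegsplit, hηp]
    · have h1 : lam 0 < lam j := lmono 0 j hjpos hj
      have h2 := lam_lt_top j hj
      have hcomp := hasOrdAt_eq (hfR (lam j) h1.le h2) (hfL (lam j) h1 h2.le) hd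
      have hxj : ¬ x ≤ lam j := not_le.2 (hxgt j hj)
      have hsd : sR (lam j) - sL (lam j) = -a j := by
        simp only [hsRdef, hsLdef]
        rw [if_neg hxj, if_neg (fun h => hxj h.le)]
        have e : ∀ i ∈ Finset.Ico 1 n, (if lam i ≤ lam j then -a i else 0)
            - (if lam i < lam j then -a i else 0) = (if i = j then -a j else 0) := by
          intro i hi
          obtain ⟨hi1, hi2⟩ := Finset.mem_Ico.1 hi
          rcases lt_trichotomy (lam i) (lam j) with h | h | h
          · rw [if_pos h.le, if_pos h, if_neg (fun he => h.ne (by rw [he]))]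
            ring
          · have hij : i = j := lam_inj i j hi2 hj h
            rw [if_pos (le_of_eq h), if_neg (by rw [h]; exact lt_irrefl _), if_pos hij, hij]
            ring
          · rw [if_neg (not_le.2 h), if_neg (asymm h), if_neg (fun he => h.ne' (by rw [he]))]
            ring
        have hstep : (τ + (∑ i ∈ Finset.Ico 1 n, if lam i ≤ lam j then -a i else 0) + 0)
            - (τ + (∑ i ∈ Finset.Ico 1 n, if lam i < lam j then -a i else 0) + 0)
            = ∑ i ∈ Finset.Ico 1 n, ((if lam i ≤ lam j then -a i else 0)
              - (if lam i < lam j then -a i else 0)) := by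
          rw [Finset.sum_sub_distrib]; ring
        rw [hstep, Finset.sum_congr rfl e,
          Finset.sum_ite_eq' (Finset.Ico 1 n) j (fun _ => -a j),
          if_pos (Finset.mem_Ico.2 ⟨hjpos, hj⟩)]
      have hzero : a j * lam j + d = 0 := by rw [hcomp, hsd]; ring
      linarith
  have rr2 : ∀ z ∈ Set.Ico (lam 0) ((p:ℝ) * lam 0),
      (∀ j, j < n → z ≠ lam j) → ∀ d : ℝ, HasOrdAt f z d → 0 ≤ d := by
    intro z hz hzne d hd
    obtain ⟨hz1, hz2⟩ := hz
    have hz0 : lam 0 < z := lt_of_le_of_ne hz1 (fun he => hzne 0 (by omega) he.symm)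
    have hcomp := hasOrdAt_eq (hfR z hz1 hz2) (hfL z hz0 hz2.le) hd
    have hsum0 : (∑ i ∈ Finset.Ico 1 n, if lam i ≤ z then -a i else 0)
        = ∑ i ∈ Finset.Ico 1 n, if lam i < z then -a i else 0 :=
      Finset.sum_congr rfl (fun i hi => by
        have hne : lam i ≠ z := fun he => hzne i (Finset.mem_Ico.1 hi).2 he.symm
        by_cases h : lam i < z
        · rw [if_pos h.le, if_pos h]
        · rw [if_neg (fun hle => h (lt_of_le_of_ne hle hne)), if_neg h])
    have hge : 0 ≤ sR z - sL z := by
      simp only [hsRdef, hsLdef]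
      rw [hsum0]
      split_ifs with h1' h2' <;> linarith
    rw [hcomp]
    exact mul_nonneg (by linarith : (0:ℝ) ≤ z) hge
  -- piecewise affine structure
  set b : ℕ → ℝ := fun r => if r < n then lam r else if r = n then x else (p:ℝ) * lam 0
    with hbdef
  have hb0 : b 0 = lam 0 := by simp only [hbdef]; rw [if_pos (by omega : 0 < n)]
  have hbtop : b (n+1) = (p:ℝ) * lam 0 := by
    simp only [hbdef]; rw [if_neg (by omega), if_neg (by omega)]
  have hblam : ∀ j, j < n → b j = lam j := fun j hj => by
    simp only [hbdef]; rw [if_pos hj]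
  have hbn : b n = x := by simp [hbdef]
  have hblt : ∀ r, r ≤ n → b r < b (r+1) := by
    intro r hr
    by_cases h1 : r + 1 < n
    · rw [hblam r (by omega), hblam (r+1) h1]
      exact hmono r h1
    · by_cases h2 : r < n
      · have he : r + 1 = n := by omega
        rw [hblam r h2, he, hbn]
        exact hxgt r h2
      · have he : r = n := by omega
        rw [he, hbn, hbtop]
        exact hx2
  have hbmono : ∀ i j, i ≤ j → j ≤ n + 1 → b i ≤ b j := by
    intro i j hij hjm
    have key : ∀ j, i ≤ j → j ≤ n + 1 → b i ≤ b j := by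
      intro j hj
      induction j, hj using Nat.le_induction with
      | base => intro _; exact le_refl _
      | succ k hk ih => intro hkm; exact le_trans (ih (by omega)) (hblt k (by omega)).le
    exact key j hij hjm
  have hgaff : ∀ r, r ≤ n → ∃ s ∈ HpSet p, ∃ cc : ℝ,
      ∀ z ∈ Set.Icc (b r) (b (r+1)), g z = s * z + cc := by
    intro r hr
    refine ⟨sR (b r), ?_, -(τ * lam 0)
      + (∑ j ∈ Finset.Ico 1 n, if lam j ≤ b r then a j * lam j else 0)
      + (if x ≤ b r then -(η * x) else 0), ?_⟩
    · simp only [hsRdef]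
      refine hp_add hp (hp_add hp hτH (hp_sum hp _ _ fun i hi => ?_)) ?_
      · split_ifs
        · exact hp_neg hp (ha i (Finset.mem_Ico.1 hi).2)
        · exact hp_zero hp
      · split_ifs
        · exact hηH
        · exact hp_zero hp
    · intro z hz
      obtain ⟨hz1, hz2⟩ := hz
      have e1 : ∀ j ∈ Finset.Ico 1 n, (-a j) * max 0 (z - lam j)
          = (if lam j ≤ b r then -a j else 0) * z
            + (if lam j ≤ b r then a j * lam j else 0) := by
        intro j hj
        obtain ⟨hj1, hj2⟩ := Finset.mem_Ico.1 hj
        by_cases h : lam j ≤ b r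
        · rw [if_pos h, if_pos h, max_eq_right (by linarith : (0:ℝ) ≤ z - lam j)]
          ring
        · have hrj : r < j := by
            by_contra hc
            push_neg at hc
            exact h (hblam j hj2 ▸ hbmono j r hc (by omega))
          have hzj : z ≤ lam j := le_trans hz2 (hblam j hj2 ▸ hbmono (r+1) j hrj (by omega))
          rw [if_neg h, if_neg h, max_eq_left (by linarith : z - lam j ≤ 0)]
          ring
      have e2 : η * max 0 (z - x)
          = (if x ≤ b r then η else 0) * z + (if x ≤ b r then -(η * x) else 0) := by
        by_cases h : x ≤ b r
        · rw [if_pos h, if_pos h, max_eq_right (by linarith : (0:ℝ) ≤ z - x)]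
          ring
        · have hrn : r < n := by
            by_contra hc
            push_neg at hc
            have he : r = n := by omega
            exact h (by rw [he] at *; exact le_of_eq hbn.symm)
          have hzx : z ≤ x := le_trans hz2 (hbn ▸ hbmono (r+1) n hrn (by omega))
          rw [if_neg h, if_neg h, max_eq_left (by linarith : z - x ≤ 0)]
          ring
      simp only [hgdef, hsRdef]
      rw [Finset.sum_congr rfl e1, e2, Finset.sum_add_distrib, ← Finset.sum_mul]
      ring
  have hnz : (0:ℤ) < (n:ℤ) + 1 := by omega
  set β : ℤ → ℝ := fun j => (p:ℝ) ^ (j / ((n:ℤ)+1)) * b (j % ((n:ℤ)+1)).toNat with hβdef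
  have hβsucc : ∀ j : ℤ, β (j+1) = (p:ℝ) ^ (j / ((n:ℤ)+1)) * b ((j % ((n:ℤ)+1)).toNat + 1) := by
    intro j
    have hr0 : 0 ≤ j % ((n:ℤ)+1) := Int.emod_nonneg j (by omega)
    have hrlt : j % ((n:ℤ)+1) < (n:ℤ)+1 := Int.emod_lt_of_pos j hnz
    have hqr : ((n:ℤ)+1) * (j / ((n:ℤ)+1)) + j % ((n:ℤ)+1) = j := Int.mul_ediv_add_emod j _
    rcases eq_or_lt_of_le (by omega : j % ((n:ℤ)+1) ≤ (n:ℤ)) with hrn | hrn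
    · have hdm : (j+1) / ((n:ℤ)+1) = j / ((n:ℤ)+1) + 1 ∧ (j+1) % ((n:ℤ)+1) = 0 :=
        (Int.ediv_emod_unique hnz).2 ⟨by rw [show ((n:ℤ)+1) * (j / ((n:ℤ)+1) + 1) = ((n:ℤ)+1) * (j / ((n:ℤ)+1)) + ((n:ℤ)+1) by ring]; omega, by omega, by omega⟩
      simp only [hβdef]
      rw [hdm.1, hdm.2]
      rw [show ((0:ℤ)).toNat = 0 from rfl, hb0]
      rw [show ((j % ((n:ℤ)+1)).toNat + 1) = n + 1 by omega, hbtop]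
      rw [zpow_add_one₀ hpne]
      ring
    · have hdm : (j+1) / ((n:ℤ)+1) = j / ((n:ℤ)+1) ∧ (j+1) % ((n:ℤ)+1) = j % ((n:ℤ)+1) + 1 :=
        (Int.ediv_emod_unique hnz).2 ⟨by omega, by omega, by omega⟩
      simp only [hβdef]
      rw [hdm.1, hdm.2]
      congr 2
      omega
  have hβlt : ∀ j : ℤ, β j < β (j+1) := by
    intro j
    rw [hβsucc j]
    simp only [hβdef]
    have hr0 : 0 ≤ j % ((n:ℤ)+1) := Int.emod_nonneg j (by omega)
    have hrlt : j % ((n:ℤ)+1) < (n:ℤ)+1 := Int.emod_lt_of_pos j hnz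
    exact mul_lt_mul_of_pos_left (hblt _ (by omega)) (zpow_pos hppos _)
  have hβlow : ∀ u : ℝ, 0 < u → ∃ k, β k ≤ u := by
    intro u hu
    refine ⟨((n:ℤ)+1) * Int.log p (u / lam 0), ?_⟩
    simp only [hβdef]
    rw [Int.mul_ediv_cancel_left _ (by omega : ((n:ℤ)+1) ≠ 0), Int.mul_emod_right,
      show ((0:ℤ)).toNat = 0 from rfl, hb0]
    have h1 := Int.zpow_log_le_self (b := p) hp.one_lt (show (0:ℝ) < u / lam 0 by positivity)
    rw [le_div_iff₀ hlam0] at h1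
    exact h1
  have hβhigh : ∀ v : ℝ, ∃ k, v < β k := by
    intro v
    rcases le_or_gt v 0 with hv | hv
    · refine ⟨0, ?_⟩
      simp only [hβdef]
      rw [Int.zero_ediv, Int.zero_emod, show ((0:ℤ)).toNat = 0 from rfl, hb0, zpow_zero, one_mul]
      linarith
    · refine ⟨((n:ℤ)+1) * (Int.log p (v / lam 0) + 1), ?_⟩
      simp only [hβdef]
      rw [Int.mul_ediv_cancel_left _ (by omega : ((n:ℤ)+1) ≠ 0), Int.mul_emod_right,
        show ((0:ℤ)).toNat = 0 from rfl, hb0]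
      have h1 := Int.lt_zpow_succ_log_self (b := p) hp.one_lt (v / lam 0)
      rw [div_lt_iff₀ hlam0] at h1
      exact h1
  have hβaff : ∀ k : ℤ, ∃ s ∈ HpSet p, ∃ cc : ℝ,
      ∀ z ∈ Set.Icc (β k) (β (k+1)), f z = s * z + cc := by
    intro k
    have hr0 : 0 ≤ k % ((n:ℤ)+1) := Int.emod_nonneg k (by omega)
    have hrlt : k % ((n:ℤ)+1) < (n:ℤ)+1 := Int.emod_lt_of_pos k hnz
    set q := k / ((n:ℤ)+1) with hqdef
    set r := (k % ((n:ℤ)+1)).toNat with hrdef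
    have hrn : r ≤ n := by omega
    have hβk : β k = (p:ℝ)^q * b r := by simp only [hβdef, hqdef, hrdef]
    have hβk1 : β (k+1) = (p:ℝ)^q * b (r+1) := by rw [hβsucc k, ← hqdef, ← hrdef]
    obtain ⟨s, hsH, cc, hcc⟩ := hgaff r hrn
    have hqpos : (0:ℝ) < (p:ℝ)^q := zpow_pos hppos q
    refine ⟨s * ((p:ℝ)^q)⁻¹, ?_, cc, ?_⟩
    · have hmem := hp_mul_zpow hp hsH (-q)
      rwa [zpow_neg] at hmem
    · intro z hz
      obtain ⟨hz1, hz2⟩ := hz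
      rw [hβk] at hz1
      rw [hβk1] at hz2
      have hlo : (p:ℝ)^q * lam 0 ≤ z := le_trans (by
        rw [← hb0]
        exact mul_le_mul_of_nonneg_left (hbmono 0 r (by omega) (by omega)) hqpos.le) hz1
      have hhi : z ≤ (p:ℝ)^(q+1) * lam 0 := by
        refine le_trans hz2 ?_
        rw [zpow_add_one₀ hpne q]
        have hble : b (r+1) ≤ (p:ℝ) * lam 0 := by
          rw [← hbtop]
          exact hbmono (r+1) (n+1) (by omega) (by omega)
        nlinarith [hqpos]
      have hmem2 : z / (p:ℝ)^q ∈ Set.Icc (b r) (b (r+1)) :=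
        ⟨by rw [le_div_iff₀ hqpos]; linarith, by rw [div_le_iff₀ hqpos]; linarith⟩
      rw [hfval q z hlo hhi, hcc _ hmem2, div_eq_mul_inv]
      ring
  have hpw : PiecewiseAffineWith (HpSet p) f := pw_of_breaks _ f β hβlt hβlow hβhigh hβaff
  -- continuity
  have hgc : Continuous g := by
    rw [hgdef]
    apply Continuous.add
    apply Continuous.add
    · exact continuous_const.mul (continuous_id.sub continuous_const)
    · exact continuous_finset_sum _ (fun i _ =>
        continuous_const.mul (continuous_const.max (continuous_id.sub continuous_const)))
    · exact continuous_const.mul (continuous_const.max (continuous_id.sub continuous_const))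
  have hcont : ContinuousOn f (Set.Ioi 0) := by
    intro z hz
    have hz0 : (0:ℝ) < z := hz
    set k := Int.log p (z / lam 0) with hkdef
    have hq : 0 < z / lam 0 := by positivity
    have hb1 : (p:ℝ)^k * lam 0 ≤ z := by
      have h1 := Int.zpow_log_le_self (b := p) hp.one_lt hq
      rw [le_div_iff₀ hlam0] at h1
      exact h1
    have hb2 : z < (p:ℝ)^(k+1) * lam 0 := by
      have h1 := Int.lt_zpow_succ_log_self (b := p) hp.one_lt (z / lam 0)
      rw [div_lt_iff₀ hlam0] at h1
      exact h1
    apply ContinuousAt.continuousWithinAt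
    have hgk : ∀ m : ℤ, Continuous (fun y => g (y / (p:ℝ)^m)) :=
      fun m => hgc.comp (continuous_id.div_const _)
    rcases eq_or_lt_of_le hb1 with heq | hlt'
    · have hR : ContinuousWithinAt f (Set.Ici z) z := by
        rw [← continuousWithinAt_inter (Iio_mem_nhds hb2)]
        apply ContinuousWithinAt.congr ((hgk k).continuousAt.continuousWithinAt)
        · intro y hy
          exact hfval k y (heq ▸ hy.1) hy.2.le
        · exact hfval k z hb1 hb2.le
      have hL : ContinuousWithinAt f (Set.Iic z) z := by
        have hlow' : (p:ℝ)^(k-1) * lam 0 < z := by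
          have h3 : (p:ℝ)^(k-1) * (p:ℝ) = (p:ℝ)^k := by
            rw [← zpow_add_one₀ hpne]; congr 1; ring
          have h2 := zpow_pos hppos (k-1)
          nlinarith [h2, h3, heq, mul_pos h2 hlam0, hp1]
        rw [← continuousWithinAt_inter (Ioi_mem_nhds hlow')]
        apply ContinuousWithinAt.congr ((hgk (k-1)).continuousAt.continuousWithinAt)
        · intro y hy
          apply hfval (k-1) y hy.2.le
          rw [show k - 1 + 1 = k by ring, heq]
          exact hy.1
        · apply hfval (k-1) z hlow'.le
          rw [show k - 1 + 1 = k by ring]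
          exact heq.ge
      have := hL.union hR
      rwa [Set.Iic_union_Ici, continuousWithinAt_univ] at this
    · have hmem : Set.Ioo ((p:ℝ)^k * lam 0) ((p:ℝ)^(k+1) * lam 0) ∈ nhds z :=
        Ioo_mem_nhds hlt' hb2
      apply ContinuousAt.congr (hgk k).continuousAt
      exact Filter.eventuallyEq_of_mem hmem (fun y hy => (hfval k y hy.1.le hy.2.le).symm)
  exact ⟨f, ⟨hcont, hpw, hfper⟩, rr1, rr2⟩


/-- Riemann–Roch problem, type II dichotomy. If `deg D = Σ a_j λ_j < 0` then
no `f ∈ K(C_p)` solves the Riemann–Roch problem for `D`; if `deg D > 0` then some `f ∈ K(C_p)`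
does. -/
theorem statement11 (p : ℕ) (hp : p.Prime)
    (n : ℕ) (hn : 1 ≤ n) (lam a : ℕ → ℝ)
    (hlam0 : 0 < lam 0)
    (hmono : ∀ j, j + 1 < n → lam j < lam (j + 1))
    (hlt : lam (n - 1) < p * lam 0)
    (ha : ∀ j, j < n → a j ∈ HpSet p) :
    ((∑ j ∈ Finset.range n, a j * lam j) < 0 →
      ¬ ∃ f : ℝ → ℝ, KCp p f ∧ SolvesRR p n lam a f) ∧
    (0 < (∑ j ∈ Finset.range n, a j * lam j) →
      ∃ f : ℝ → ℝ, KCp p f ∧ SolvesRR p n lam a f) := by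
  constructor
  · intro hdeg
    exact part1 p hp n hn lam a hlam0 hmono hlt hdeg
  · intro hdeg
    exact part2 p hp n hn lam a hlam0 hmono hlt ha hdeg
end
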